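/- arXiv:2505.10423 — 5 statements merged into one kernel-verified Lean document; each statement's English description precedes it below -/
import Mathlib

section
/- Let X be a finite nonempty set and F a finite class of functions X → {−1,1}, regarded as a sign matrix A : F × X → {−1,1} with A(f,x) = f(x). Then for every product probability distribution ζ = μ ⊗ ρ on F × X there exist subsets B ⊆ F, C ⊆ X and a function g : {0,1} × {0,1} → [−1,1] such that | E_{(f,x)∼ζ}[ g(1_B(f), 1_C(x)) · f(x) ] | ≥ 1 / (8 · sq(F)²). -/
open MeasureTheory Finset

attribute [local instance] Classical.propDecidable

/-- `ρ` is a probability distribution on the finite type `X`. -/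
def IsDist {X : Type} [Fintype X] (ρ : X → ℝ) : Prop :=
  (∀ x, 0 ≤ ρ x) ∧ ∑ x, ρ x = 1

/-- `μ` is a probability distribution supported on the finite class `F`. -/
def IsDistOn {X : Type} [Fintype X] (F : Finset (X → ℝ)) (μ : (X → ℝ) → ℝ) : Prop :=
  (∀ f, 0 ≤ μ f) ∧ (∀ f ∉ F, μ f = 0) ∧ ∑ f ∈ F, μ f = 1

/-- The statistical query dimension of a finite class `F` of `±1`-valued functions. -/
noncomputable def sqDim {X : Type} [Fintype X] (F : Finset (X → ℝ)) : ℕ :=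
  sSup {d : ℕ | ∃ ρ : X → ℝ, IsDist ρ ∧ ∃ g : Fin d → (X → ℝ),
    Function.Injective g ∧ (∀ i, g i ∈ F) ∧
    ∀ i j, i ≠ j → |∑ x, ρ x * (g i x * g j x)| ≤ 1 / (d : ℝ)}

/-- For every product distribution `μ ⊗ ρ` on `F × X` there is a 2-bit protocol
(membership bits for `B ⊆ F` and `C ⊆ X`, combined by `g : {0,1}² → [−1,1]`) whose
expected output correlates with the evaluation matrix `A(f,x) = f(x)` at least
`1/(8·sq(F)²)`. -/
theorem two_bit_protocol_for_class {X : Type} [Fintype X] [Nonempty X]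
    (F : Finset (X → ℝ)) (hF : F.Nonempty)
    (hsign : ∀ f ∈ F, ∀ x, f x = 1 ∨ f x = -1)
    (μ : (X → ℝ) → ℝ) (hμ : IsDistOn F μ) (ρ : X → ℝ) (hρ : IsDist ρ) :
    ∃ B : Set (X → ℝ), ∃ C : Set X, ∃ g : ℝ → ℝ → ℝ,
      (∀ s ∈ ({0, 1} : Set ℝ), ∀ t ∈ ({0, 1} : Set ℝ), |g s t| ≤ 1) ∧
      1 / (8 * (sqDim F : ℝ) ^ 2) ≤
        |∑ f ∈ F, ∑ x : X,
            μ f * ρ x * g (B.indicator 1 f) (C.indicator 1 x) * f x| := by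
  classical
  obtain ⟨hμ0, hμF, hμ1⟩ := hμ
  obtain ⟨hρ0, hρ1⟩ := hρ
  set S : Set ℕ := {d : ℕ | ∃ ρ' : X → ℝ, IsDist ρ' ∧ ∃ g : Fin d → (X → ℝ),
    Function.Injective g ∧ (∀ i, g i ∈ F) ∧
    ∀ i j, i ≠ j → |∑ x, ρ' x * (g i x * g j x)| ≤ 1 / (d : ℝ)} with hSdef
  have hdim : sqDim F = sSup S := rfl
  -- correlation
  set corr : (X → ℝ) → (X → ℝ) → ℝ := fun f h => ∑ x, ρ x * (f x * h x) with hcorrdef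
  have hcorr_symm : ∀ f h, corr f h = corr h f := by
    intro f h
    exact Finset.sum_congr rfl (fun x _ => by ring)
  -- S is bounded above by F.card
  have hbdd : BddAbove S := by
    refine ⟨F.card, ?_⟩
    rintro n ⟨ρ', _, g, hg_inj, hg_mem, _⟩
    have hinj : Function.Injective (fun i : Fin n => (⟨g i, hg_mem i⟩ : {f // f ∈ F})) := by
      intro i j hij
      exact hg_inj (congrArg Subtype.val hij)
    simpa using Fintype.card_le_of_injective _ hinj
  obtain ⟨f₀, hf₀⟩ := hF
  have h1S : 1 ∈ S := by
    refine ⟨ρ, ⟨hρ0, hρ1⟩, fun _ => f₀, Function.injective_of_subsingleton _,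
      fun _ => hf₀, ?_⟩
    intro i j hij
    exact absurd (Subsingleton.elim i j) hij
  set d : ℕ := sqDim F with hd
  have hd1 : 1 ≤ d := by
    have := le_csSup hbdd h1S
    rw [← hdim] at this
    exact this
  have hdS : (d + 1) ∉ S := by
    intro hmem
    have := le_csSup hbdd hmem
    rw [← hdim] at this
    omega
  have hd1R : (1 : ℝ) ≤ (d : ℝ) := by exact_mod_cast hd1
  -- family of almost-orthogonal subsets
  set P : Finset (X → ℝ) → Prop := fun T =>
    ∀ f ∈ T, ∀ g ∈ T, f ≠ g → |corr f g| ≤ 1 / ((d : ℝ) + 1) with hPdef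
  set Fam : Finset (Finset (X → ℝ)) := F.powerset.filter P with hFamdef
  have hFamne : Fam.Nonempty := by
    refine ⟨∅, ?_⟩
    simp [hFamdef, hPdef]
  obtain ⟨T, hTFam, hTmax⟩ := Finset.exists_max_image Fam Finset.card hFamne
  have hTF : T ⊆ F := by
    have := (Finset.mem_filter.mp hTFam).1
    exact Finset.mem_powerset.mp this
  have hTP : P T := (Finset.mem_filter.mp hTFam).2
  -- T is nonempty
  have hTne : T.Nonempty := by
    by_contra hne
    rw [Finset.not_nonempty_iff_eq_empty] at hne
    have hmem : ({f₀} : Finset (X → ℝ)) ∈ Fam := by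
      refine Finset.mem_filter.mpr ⟨Finset.mem_powerset.mpr (by simpa using hf₀), ?_⟩
      intro f hf g hg hfg
      simp only [Finset.mem_singleton] at hf hg
      exact absurd (hf.trans hg.symm) hfg
    have := hTmax _ hmem
    simp [hne] at this
  -- T.card ≤ d
  have hTcard : T.card ≤ d := by
    by_contra hlt
    push_neg at hlt
    obtain ⟨T', hT'T, hT'card⟩ := Finset.exists_subset_card_eq (show d + 1 ≤ T.card by omega)
    have hmem : (d + 1) ∈ S := by
      set e := T'.equivFin with he
      refine ⟨ρ, ⟨hρ0, hρ1⟩,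
        fun i => (e.symm (Fin.cast hT'card.symm i) : X → ℝ), ?_, ?_, ?_⟩
      · intro i j hij
        have : e.symm (Fin.cast hT'card.symm i) = e.symm (Fin.cast hT'card.symm j) :=
          Subtype.ext hij
        have := e.symm.injective this
        exact Fin.cast_injective _ this
      · intro i
        exact hTF (hT'T (e.symm (Fin.cast hT'card.symm i)).2)
      · intro i j hij
        have hne : (e.symm (Fin.cast hT'card.symm i) : X → ℝ) ≠
            (e.symm (Fin.cast hT'card.symm j) : X → ℝ) := by
          intro hcontra
          apply hij
          have : e.symm (Fin.cast hT'card.symm i) = e.symm (Fin.cast hT'card.symm j) :=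
            Subtype.ext hcontra
          have := e.symm.injective this
          exact Fin.cast_injective _ this
        have := hTP _ (hT'T (e.symm (Fin.cast hT'card.symm i)).2)
          _ (hT'T (e.symm (Fin.cast hT'card.symm j)).2) hne
        calc |∑ x, ρ x * _| ≤ 1 / ((d : ℝ) + 1) := this
          _ = 1 / ((d + 1 : ℕ) : ℝ) := by push_cast; ring
    exact hdS hmem
  -- every f in F correlates with some h in T
  have hcover : ∀ f ∈ F, ∃ h ∈ T, 1 / ((d : ℝ) + 1) < |corr f h| := by
    intro f hfF
    by_cases hfT : f ∈ T
    · refine ⟨f, hfT, ?_⟩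
      have : corr f f = 1 := by
        rw [hcorrdef]
        have : ∀ x, ρ x * (f x * f x) = ρ x := by
          intro x
          rcases hsign f hfF x with h1 | h1 <;> rw [h1] <;> ring
        simp only [this]
        exact hρ1
      rw [this]
      rw [abs_one]
      rw [div_lt_one (by linarith)]
      linarith
    · by_contra hcon
      push_neg at hcon
      have hmem : insert f T ∈ Fam := by
        refine Finset.mem_filter.mpr ⟨Finset.mem_powerset.mpr ?_, ?_⟩
        · exact Finset.insert_subset hfF hTF
        · intro a ha b hb hab
          rcases Finset.mem_insert.mp ha with rfl | haT
          · rcases Finset.mem_insert.mp hb with rfl | hbT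
            · exact absurd rfl hab
            · exact hcon b hbT
          · rcases Finset.mem_insert.mp hb with rfl | hbT
            · rw [hcorr_symm]; exact hcon a haT
            · exact hTP a haT b hbT hab
      have hcard := hTmax _ hmem
      rw [Finset.card_insert_of_notMem hfT] at hcard
      omega
  -- averaging to find a good h ∈ T
  set ind : (X → ℝ) → (X → ℝ) → ℝ :=
    fun f h => if 1 / ((d : ℝ) + 1) < |corr f h| then 1 else 0 with hinddef
  have hind_nonneg : ∀ f h, 0 ≤ ind f h := by
    intro f h; rw [hinddef]; dsimp only; split <;> norm_num
  have htotal : (1 : ℝ) ≤ ∑ h ∈ T, ∑ f ∈ F, μ f * ind f h := by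
    rw [Finset.sum_comm]
    calc (1 : ℝ) = ∑ f ∈ F, μ f := hμ1.symm
      _ ≤ ∑ f ∈ F, ∑ h ∈ T, μ f * ind f h := by
          refine Finset.sum_le_sum ?_
          intro f hfF
          rw [← Finset.mul_sum]
          refine le_mul_of_one_le_right (hμ0 f) ?_
          obtain ⟨h₀, hh₀T, hh₀⟩ := hcover f hfF
          have : ind f h₀ = 1 := by rw [hinddef]; dsimp only; rw [if_pos hh₀]
          calc (1 : ℝ) = ind f h₀ := this.symm
            _ ≤ ∑ h ∈ T, ind f h :=
                Finset.single_le_sum (fun h _ => hind_nonneg f h) hh₀T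
  have hTcardpos : (0 : ℝ) < (T.card : ℝ) := by
    exact_mod_cast Finset.card_pos.mpr hTne
  have hgoodh : ∃ h ∈ T, 1 / (T.card : ℝ) ≤ ∑ f ∈ F, μ f * ind f h := by
    refine Finset.exists_le_of_sum_le hTne ?_
    rw [Finset.sum_const, nsmul_eq_mul, mul_one_div, div_self (ne_of_gt hTcardpos)]
    exact htotal
  obtain ⟨h, hhT, hh⟩ := hgoodh
  have hhF : h ∈ F := hTF hhT
  -- key inequality
  have hkey : 1 / ((d : ℝ) * ((d : ℝ) + 1)) ≤ ∑ f ∈ F, μ f * |corr f h| := by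
    have step1 : ∑ f ∈ F, μ f * ind f h * (1 / ((d : ℝ) + 1)) ≤
        ∑ f ∈ F, μ f * |corr f h| := by
      refine Finset.sum_le_sum ?_
      intro f hfF
      rw [hinddef]
      dsimp only
      split
      · rename_i hc
        rw [mul_one]
        exact mul_le_mul_of_nonneg_left (le_of_lt hc) (hμ0 f)
      · rw [mul_zero, zero_mul]
        exact mul_nonneg (hμ0 f) (abs_nonneg _)
    have step2 : 1 / ((d : ℝ) * ((d : ℝ) + 1)) ≤
        ∑ f ∈ F, μ f * ind f h * (1 / ((d : ℝ) + 1)) := by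
      rw [← Finset.sum_mul]
      have h1 : 1 / ((d : ℝ)) ≤ ∑ f ∈ F, μ f * ind f h := by
        refine le_trans ?_ hh
        apply one_div_le_one_div_of_le hTcardpos
        exact_mod_cast hTcard
      calc 1 / ((d : ℝ) * ((d : ℝ) + 1)) = (1 / (d : ℝ)) * (1 / ((d : ℝ) + 1)) := by
            rw [div_mul_div_comm, one_mul]
        _ ≤ (∑ f ∈ F, μ f * ind f h) * (1 / ((d : ℝ) + 1)) := by
            refine mul_le_mul_of_nonneg_right h1 ?_
            positivity
    exact le_trans step2 step1
  -- build the protocol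
  refine ⟨{f | 0 ≤ corr f h}, {x | h x = 1},
    fun s t => (2 * s - 1) * (2 * t - 1), ?_, ?_⟩
  · intro s hs t ht
    simp only [Set.mem_insert_iff, Set.mem_singleton_iff] at hs ht
    rcases hs with rfl | rfl <;> rcases ht with rfl | rfl <;> norm_num
  · set B : Set (X → ℝ) := {f | 0 ≤ corr f h} with hBdef
    set C : Set X := {x | h x = 1} with hCdef
    have hCval : ∀ x, 2 * C.indicator 1 x - 1 = h x := by
      intro x
      rcases hsign h hhF x with h1 | h1
      · have hxC : x ∈ C := by rw [hCdef]; exact h1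
        rw [Set.indicator_of_mem hxC, h1]; norm_num
      · have : x ∉ C := by
          simp only [hCdef, Set.mem_setOf_eq, h1]
          norm_num
        rw [Set.indicator_of_notMem this, h1]
        norm_num
    have hBval : ∀ f, (2 * B.indicator 1 f - 1) * corr f h = |corr f h| := by
      intro f
      by_cases hfB : 0 ≤ corr f h
      · have hfB' : f ∈ B := by rw [hBdef]; exact hfB
        rw [Set.indicator_of_mem hfB']
        rw [abs_of_nonneg hfB]
        norm_num
      · push_neg at hfB
        have hfB' : f ∉ B := by rw [hBdef]; exact not_le.mpr hfB
        rw [Set.indicator_of_notMem hfB']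
        rw [abs_of_neg hfB]
        norm_num
    have hsumeq : ∑ f ∈ F, ∑ x : X,
        μ f * ρ x * ((2 * B.indicator 1 f - 1) * (2 * C.indicator 1 x - 1)) * f x
        = ∑ f ∈ F, μ f * |corr f h| := by
      refine Finset.sum_congr rfl ?_
      intro f hfF
      have : ∀ x, μ f * ρ x * ((2 * B.indicator 1 f - 1) * (2 * C.indicator 1 x - 1)) * f x
          = μ f * (2 * B.indicator 1 f - 1) * (ρ x * (f x * h x)) := by
        intro x
        rw [hCval x]
        ring
      rw [Finset.sum_congr rfl (fun x _ => this x), ← Finset.mul_sum]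
      rw [show (∑ x, ρ x * (f x * h x)) = corr f h from rfl]
      rw [mul_assoc, hBval f]
    rw [hsumeq]
    have hnn : 0 ≤ ∑ f ∈ F, μ f * |corr f h| := by
      refine Finset.sum_nonneg ?_
      intro f _
      exact mul_nonneg (hμ0 f) (abs_nonneg _)
    rw [abs_of_nonneg hnn]
    refine le_trans ?_ hkey
    apply one_div_le_one_div_of_le
    · positivity
    · nlinarith
end

section
/- There is a universal constant c > 0 such that the following holds. Let X be a finite nonempty set, F a finite class of functions X → {−1,1}, μ a probability distribution on F, and ρ a probability distribution on X. Sample f, g ∼ μ independently and x, z ∼ ρ independently (all four mutually independent). Then Pr[ g(z)·g(x)·f(x) = f(z) ] ≥ 1/2 + c·sq(F)^{−8}. (That is, the randomized predictor that predicts f(z) by g(z)·g(x)·f(x), for a fresh hypothesis g ∼ μ and a fresh labeled example (x, f(x)), succeeds with probability noticeably better than 1/2.) -/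
open MeasureTheory Finset

attribute [local instance] Classical.propDecidable

lemma sum4_comm {α β γ δ M : Type*} [AddCommMonoid M] (s : Finset α) (t : Finset β)
    (u : Finset γ) (v : Finset δ) (f : α → β → γ → δ → M) :
    ∑ a ∈ s, ∑ b ∈ t, ∑ c ∈ u, ∑ d ∈ v, f a b c d
      = ∑ c ∈ u, ∑ d ∈ v, ∑ a ∈ s, ∑ b ∈ t, f a b c d := by
  refine (Finset.sum_congr rfl fun a _ => Finset.sum_comm).trans ?_
  refine Finset.sum_comm.trans ?_
  refine (Finset.sum_congr rfl fun c _ => Finset.sum_congr rfl fun a _ => Finset.sum_comm).trans ?_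
  exact Finset.sum_congr rfl fun c _ => Finset.sum_comm

lemma sum3_comm {α γ δ M : Type*} [AddCommMonoid M] (s : Finset α)
    (u : Finset γ) (v : Finset δ) (f : α → γ → δ → M) :
    ∑ a ∈ s, ∑ c ∈ u, ∑ d ∈ v, f a c d
      = ∑ c ∈ u, ∑ d ∈ v, ∑ a ∈ s, f a c d := by
  refine Finset.sum_comm.trans ?_
  exact Finset.sum_congr rfl fun c _ => Finset.sum_comm

set_option maxHeartbeats 2000000 in
/-- The randomized predictor that guesses `f(z)` by `g(z)·g(x)·f(x)`, for an
independent fresh hypothesis `g ∼ μ` and fresh example `x ∼ ρ`, succeeds with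
probability at least `1/2 + c·sq(F)⁻⁸`. -/
theorem predict_success_probability :
    ∃ c : ℝ, 0 < c ∧
      ∀ (X : Type) [Fintype X] [Nonempty X] (F : Finset (X → ℝ)),
        (∀ f ∈ F, ∀ x, f x = 1 ∨ f x = -1) →
        ∀ μ : (X → ℝ) → ℝ, IsDistOn F μ →
        ∀ ρ : X → ℝ, IsDist ρ →
          1 / 2 + c / (sqDim F : ℝ) ^ 8 ≤
            ∑ f ∈ F, ∑ g ∈ F, ∑ x : X, ∑ z : X,
              (if g z * g x * f x = f z then μ f * μ g * ρ x * ρ z else 0) := by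
  refine ⟨1/32, by norm_num, ?_⟩
  intro X _ _ F hF μ hμ ρ hρ
  obtain ⟨hμ0, hμsupp, hμ1⟩ := hμ
  obtain ⟨hρ0, hρ1⟩ := hρ
  set B : (X → ℝ) → (X → ℝ) → ℝ := fun f g => ∑ x, ρ x * (f x * g x) with hBdef
  set A : ℝ := ∑ f ∈ F, ∑ g ∈ F, μ f * μ g * B f g ^ 2 with hAdef
  have hFne : F.Nonempty := by
    by_contra h
    rw [Finset.not_nonempty_iff_eq_empty] at h
    simp [h] at hμ1
  -- the set in the definition of sqDim
  set sqSet : Set ℕ := {d : ℕ | ∃ ρ : X → ℝ, IsDist ρ ∧ ∃ g : Fin d → (X → ℝ),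
    Function.Injective g ∧ (∀ i, g i ∈ F) ∧
    ∀ i j, i ≠ j → |∑ x, ρ x * (g i x * g j x)| ≤ 1 / (d : ℝ)} with hsqSet
  have hsq : sqDim F = sSup sqSet := rfl
  have hBdd : BddAbove sqSet := by
    refine ⟨F.card, fun m hm => ?_⟩
    obtain ⟨ρ', _, g, hg, hgF, _⟩ := hm
    have : Fintype.card (Fin m) ≤ Fintype.card {x // x ∈ F} :=
      Fintype.card_le_of_injective (fun i => ⟨g i, hgF i⟩)
        (fun i j hij => hg (by simpa using congrArg Subtype.val hij))
    simpa using this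
  set d := sqDim F with hd
  have hd1 : 1 ≤ d := by
    apply le_csSup hBdd
    obtain ⟨f₀, hf₀⟩ := hFne
    refine ⟨fun _ => 1 / (Fintype.card X : ℝ), ⟨fun x => by positivity, ?_⟩,
      fun _ => f₀, fun i j _ => Subsingleton.elim i j, fun _ => hf₀, fun i j hij => ?_⟩
    · rw [Finset.sum_const, card_univ, nsmul_eq_mul]
      field_simp
    · exact absurd (Subsingleton.elim i j) hij
  set dR : ℝ := (d : ℝ) with hdR
  have hdR1 : 1 ≤ dR := by rw [hdR]; exact_mod_cast hd1
  have hdR0 : 0 < dR := by linarith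
  -- B basic facts
  have hBsymm : ∀ f g, B f g = B g f := fun f g =>
    Finset.sum_congr rfl fun x _ => by ring
  have hBff : ∀ f ∈ F, B f f = 1 := by
    intro f hf
    rw [hBdef]
    have : ∀ x : X, ρ x * (f x * f x) = ρ x := by
      intro x; rcases hF f hf x with h | h <;> rw [h] <;> ring
    simp only [this]; exact hρ1
  set τ : ℝ := 1 / (dR + 1) with hτ
  have hτ0 : 0 < τ := by positivity
  have hτ1 : τ ≤ 1 := by rw [hτ]; rw [div_le_one (by linarith)]; linarith
  -- packing bound
  have hpack : ∀ S : Finset (X → ℝ), S ⊆ F →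
      (∀ s ∈ S, ∀ t ∈ S, s ≠ t → |B s t| ≤ τ) → S.card ≤ d := by
    intro S hSF hSP
    by_contra h
    push_neg at h
    obtain ⟨S', hS'S, hS'card⟩ := Finset.exists_subset_card_eq (show d + 1 ≤ S.card from h)
    have hmem : d + 1 ∈ sqSet := by
      refine ⟨ρ, ⟨hρ0, hρ1⟩, fun i => (S'.equivFin.symm (Fin.cast hS'card.symm i) : X → ℝ),
        ?_, ?_, ?_⟩
      · intro i j hij
        have h2 : S'.equivFin.symm (Fin.cast hS'card.symm i)
            = S'.equivFin.symm (Fin.cast hS'card.symm j) := Subtype.coe_injective hij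
        have h3 := S'.equivFin.symm.injective h2
        exact Fin.cast_injective _ h3
      · intro i
        exact hSF (hS'S (S'.equivFin.symm (Fin.cast hS'card.symm i)).2)
      · intro i j hij
        have hne : (S'.equivFin.symm (Fin.cast hS'card.symm i) : X → ℝ)
            ≠ (S'.equivFin.symm (Fin.cast hS'card.symm j) : X → ℝ) := by
          intro hc
          exact hij (Fin.cast_injective _ (S'.equivFin.symm.injective (Subtype.coe_injective hc)))
        have h4 := hSP _ (hS'S (S'.equivFin.symm (Fin.cast hS'card.symm i)).2)
          _ (hS'S (S'.equivFin.symm (Fin.cast hS'card.symm j)).2) hne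
        refine le_trans h4 ?_
        rw [hτ, hdR]
        push_cast
        norm_num
    have : d + 1 ≤ d := le_csSup hBdd hmem
    omega
  -- maximal nearly-orthogonal set
  obtain ⟨S, hSF, hSP, hScover⟩ :
      ∃ S : Finset (X → ℝ), S ⊆ F ∧ (∀ s ∈ S, ∀ t ∈ S, s ≠ t → |B s t| ≤ τ) ∧
        (∀ f ∈ F, ∃ s ∈ S, τ ^ 2 ≤ B f s ^ 2) := by
    set P : Finset (X → ℝ) → Prop := fun T => ∀ s ∈ T, ∀ t ∈ T, s ≠ t → |B s t| ≤ τ with hP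
    have instP : DecidablePred P := fun T => Classical.propDecidable _
    have hmem𝒮 : ∀ T, T ∈ @Finset.filter _ P instP F.powerset ↔ T ⊆ F ∧ P T := fun T => by
      rw [Finset.mem_filter, Finset.mem_powerset]
    obtain ⟨S, hS𝒮, hSmax⟩ := Finset.exists_max_image
      (@Finset.filter _ P instP F.powerset)
      Finset.card ⟨∅, (hmem𝒮 ∅).mpr ⟨Finset.empty_subset F,
        fun s hs => absurd hs (Finset.notMem_empty s)⟩⟩
    obtain ⟨hSF, hSP⟩ := (hmem𝒮 S).mp hS𝒮
    refine ⟨S, hSF, hSP, ?_⟩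
    intro f hf
    by_cases hfS : f ∈ S
    · exact ⟨f, hfS, by rw [hBff f hf]; nlinarith⟩
    · by_contra hc
      push_neg at hc
      have habs : ∀ t ∈ S, |B f t| ≤ τ := by
        intro t ht
        have h2 := hc t ht
        apply abs_le.mpr
        constructor <;> nlinarith [sq_nonneg (B f t + τ), sq_nonneg (B f t - τ)]
      have hmem : insert f S ∈ @Finset.filter _ P instP F.powerset := by
        refine (hmem𝒮 _).mpr ⟨Finset.insert_subset hf hSF, ?_⟩
        intro a ha b hb hab
        rcases Finset.mem_insert.mp ha with rfl | ha' <;>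
          rcases Finset.mem_insert.mp hb with rfl | hb'
        · exact absurd rfl hab
        · exact habs b hb'
        · rw [hBsymm]; exact habs a ha'
        · exact hSP a ha' b hb' hab
      have := hSmax _ hmem
      rw [Finset.card_insert_of_notMem hfS] at this
      omega
  have hScard : S.card ≤ d := hpack S hSF hSP
  have hSne : S.Nonempty := by
    obtain ⟨f₀, hf₀⟩ := hFne
    obtain ⟨s, hs, -⟩ := hScover f₀ hf₀
    exact ⟨s, hs⟩
  -- averaging: some s ∈ S captures a τ²/d fraction
  obtain ⟨s, hsS, hsavg⟩ : ∃ s ∈ S, τ ^ 2 / dR ≤ ∑ f ∈ F, μ f * B f s ^ 2 := by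
    have hinner : ∀ f ∈ F, τ ^ 2 ≤ ∑ t ∈ S, B f t ^ 2 := by
      intro f hf
      obtain ⟨t, ht, h⟩ := hScover f hf
      exact le_trans h (Finset.single_le_sum (f := fun u => B f u ^ 2) (fun u _ => sq_nonneg _) ht)
    have h1 : τ ^ 2 ≤ ∑ f ∈ F, μ f * ∑ t ∈ S, B f t ^ 2 := by
      calc τ ^ 2 = ∑ f ∈ F, μ f * τ ^ 2 := by rw [← Finset.sum_mul, hμ1, one_mul]
        _ ≤ _ := Finset.sum_le_sum fun f hf =>
            mul_le_mul_of_nonneg_left (hinner f hf) (hμ0 f)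
    have h2 : ∑ f ∈ F, μ f * ∑ t ∈ S, B f t ^ 2 = ∑ t ∈ S, ∑ f ∈ F, μ f * B f t ^ 2 := by
      simp only [Finset.mul_sum]
      exact Finset.sum_comm
    by_contra hc
    push_neg at hc
    have h3 : ∑ t ∈ S, ∑ f ∈ F, μ f * B f t ^ 2 < ∑ t ∈ S, τ ^ 2 / dR :=
      Finset.sum_lt_sum_of_nonempty hSne hc
    have h4 : ∑ t ∈ S, τ ^ 2 / dR = (S.card : ℝ) * (τ ^ 2 / dR) := by
      rw [Finset.sum_const, nsmul_eq_mul]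
    have h5 : (S.card : ℝ) * (τ ^ 2 / dR) ≤ dR * (τ ^ 2 / dR) := by
      apply mul_le_mul_of_nonneg_right _ (by positivity)
      rw [hdR]
      exact_mod_cast hScard
    have h6 : dR * (τ ^ 2 / dR) = τ ^ 2 := by field_simp
    linarith [h2 ▸ h1]
  -- Cauchy-Schwarz: (∑ f, μ f * B f s ^ 2)^2 ≤ A
  have hCS : (∑ f ∈ F, μ f * B f s ^ 2) ^ 2 ≤ A := by
    have hsF : s ∈ F := hSF hsS
    have key : ∀ f g : X → ℝ, μ f * μ g * B f g ^ 2
        = ∑ x : X, ∑ z : X, ρ x * ρ z * ((μ f * (f x * f z)) * (μ g * (g x * g z))) := by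
      intro f g
      rw [sq]
      simp only [hBdef]
      rw [Finset.sum_mul_sum, Finset.mul_sum]
      refine Finset.sum_congr rfl fun x _ => ?_
      rw [Finset.mul_sum]
      exact Finset.sum_congr rfl fun z _ => by ring
    have hA' : A = ∑ x : X, ∑ z : X, ρ x * ρ z * (∑ f ∈ F, μ f * (f x * f z)) ^ 2 := by
      calc A = ∑ f ∈ F, ∑ g ∈ F, ∑ x : X, ∑ z : X,
            ρ x * ρ z * ((μ f * (f x * f z)) * (μ g * (g x * g z))) :=
          Finset.sum_congr rfl fun f _ => Finset.sum_congr rfl fun g _ => key f g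
        _ = ∑ x : X, ∑ z : X, ∑ f ∈ F, ∑ g ∈ F,
            ρ x * ρ z * ((μ f * (f x * f z)) * (μ g * (g x * g z))) :=
          sum4_comm _ _ _ _ _
        _ = _ := by
          refine Finset.sum_congr rfl fun x _ => Finset.sum_congr rfl fun z _ => ?_
          symm
          rw [sq, Finset.sum_mul_sum, Finset.mul_sum]
          refine Finset.sum_congr rfl fun f _ => ?_
          rw [Finset.mul_sum]
    have CS := Finset.sum_mul_sq_le_sq_mul_sq Finset.univ
      (fun p : X × X => Real.sqrt (ρ p.1) * Real.sqrt (ρ p.2) * (∑ f ∈ F, μ f * (f p.1 * f p.2)))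
      (fun p : X × X => Real.sqrt (ρ p.1) * Real.sqrt (ρ p.2) * (s p.1 * s p.2))
    have huv : (∑ p : X × X,
        (Real.sqrt (ρ p.1) * Real.sqrt (ρ p.2) * (∑ f ∈ F, μ f * (f p.1 * f p.2))) *
        (Real.sqrt (ρ p.1) * Real.sqrt (ρ p.2) * (s p.1 * s p.2)))
        = ∑ f ∈ F, μ f * B f s ^ 2 := by
      rw [Fintype.sum_prod_type]
      have step : ∀ x z : X,
          (Real.sqrt (ρ x) * Real.sqrt (ρ z) * (∑ f ∈ F, μ f * (f x * f z))) *
          (Real.sqrt (ρ x) * Real.sqrt (ρ z) * (s x * s z))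
          = ∑ f ∈ F, ρ x * (f x * s x) * (ρ z * (f z * s z)) * μ f := by
        intro x z
        have e1 : Real.sqrt (ρ x) * Real.sqrt (ρ x) = ρ x := Real.mul_self_sqrt (hρ0 x)
        have e2 : Real.sqrt (ρ z) * Real.sqrt (ρ z) = ρ z := Real.mul_self_sqrt (hρ0 z)
        calc (Real.sqrt (ρ x) * Real.sqrt (ρ z) * (∑ f ∈ F, μ f * (f x * f z))) *
              (Real.sqrt (ρ x) * Real.sqrt (ρ z) * (s x * s z))
            = (Real.sqrt (ρ x) * Real.sqrt (ρ x)) * ((Real.sqrt (ρ z) * Real.sqrt (ρ z)) *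
              ((∑ f ∈ F, μ f * (f x * f z)) * (s x * s z))) := by ring
          _ = ρ x * (ρ z * ((∑ f ∈ F, μ f * (f x * f z)) * (s x * s z))) := by rw [e1, e2]
          _ = ∑ f ∈ F, ρ x * (f x * s x) * (ρ z * (f z * s z)) * μ f := by
              rw [Finset.sum_mul, Finset.mul_sum, Finset.mul_sum]
              exact Finset.sum_congr rfl fun f _ => by ring
      calc ∑ x : X, ∑ z : X,
            (Real.sqrt (ρ x) * Real.sqrt (ρ z) * (∑ f ∈ F, μ f * (f x * f z))) *
            (Real.sqrt (ρ x) * Real.sqrt (ρ z) * (s x * s z))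
          = ∑ x : X, ∑ z : X, ∑ f ∈ F, ρ x * (f x * s x) * (ρ z * (f z * s z)) * μ f :=
          Finset.sum_congr rfl fun x _ => Finset.sum_congr rfl fun z _ => step x z
        _ = ∑ f ∈ F, ∑ x : X, ∑ z : X, ρ x * (f x * s x) * (ρ z * (f z * s z)) * μ f :=
          (sum3_comm _ _ _ _).symm
        _ = ∑ f ∈ F, μ f * B f s ^ 2 := by
          refine Finset.sum_congr rfl fun f _ => ?_
          rw [sq]
          simp only [hBdef]
          rw [Finset.sum_mul_sum, Finset.mul_sum]
          refine Finset.sum_congr rfl fun x _ => ?_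
          rw [Finset.mul_sum]
          exact Finset.sum_congr rfl fun z _ => by ring
    have hu2 : (∑ p : X × X,
        (Real.sqrt (ρ p.1) * Real.sqrt (ρ p.2) * (∑ f ∈ F, μ f * (f p.1 * f p.2))) ^ 2) = A := by
      rw [Fintype.sum_prod_type, hA']
      refine Finset.sum_congr rfl fun x _ => Finset.sum_congr rfl fun z _ => ?_
      have e1 : Real.sqrt (ρ x) * Real.sqrt (ρ x) = ρ x := Real.mul_self_sqrt (hρ0 x)
      have e2 : Real.sqrt (ρ z) * Real.sqrt (ρ z) = ρ z := Real.mul_self_sqrt (hρ0 z)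
      calc (Real.sqrt (ρ x) * Real.sqrt (ρ z) * (∑ f ∈ F, μ f * (f x * f z))) ^ 2
          = (Real.sqrt (ρ x) * Real.sqrt (ρ x)) * ((Real.sqrt (ρ z) * Real.sqrt (ρ z)) *
            (∑ f ∈ F, μ f * (f x * f z)) ^ 2) := by ring
        _ = ρ x * ρ z * (∑ f ∈ F, μ f * (f x * f z)) ^ 2 := by rw [e1, e2]; ring
    have hv2 : (∑ p : X × X,
        (Real.sqrt (ρ p.1) * Real.sqrt (ρ p.2) * (s p.1 * s p.2)) ^ 2) = 1 := by
      rw [Fintype.sum_prod_type]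
      have step : ∀ x z : X,
          (Real.sqrt (ρ x) * Real.sqrt (ρ z) * (s x * s z)) ^ 2 = ρ x * ρ z := by
        intro x z
        have e1 : Real.sqrt (ρ x) * Real.sqrt (ρ x) = ρ x := Real.mul_self_sqrt (hρ0 x)
        have e2 : Real.sqrt (ρ z) * Real.sqrt (ρ z) = ρ z := Real.mul_self_sqrt (hρ0 z)
        have e3 : s x * s x = 1 := by rcases hF s hsF x with h | h <;> rw [h] <;> norm_num
        have e4 : s z * s z = 1 := by rcases hF s hsF z with h | h <;> rw [h] <;> norm_num
        calc (Real.sqrt (ρ x) * Real.sqrt (ρ z) * (s x * s z)) ^ 2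
            = (Real.sqrt (ρ x) * Real.sqrt (ρ x)) * ((Real.sqrt (ρ z) * Real.sqrt (ρ z)) *
              ((s x * s x) * (s z * s z))) := by ring
          _ = ρ x * ρ z := by rw [e1, e2, e3, e4]; ring
      calc ∑ x : X, ∑ z : X, (Real.sqrt (ρ x) * Real.sqrt (ρ z) * (s x * s z)) ^ 2
          = ∑ x : X, ∑ z : X, ρ x * ρ z :=
          Finset.sum_congr rfl fun x _ => Finset.sum_congr rfl fun z _ => step x z
        _ = (∑ x : X, ρ x) * (∑ z : X, ρ z) := (Finset.sum_mul_sum _ _ _ _).symm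
        _ = 1 := by rw [hρ1, one_mul]
    rw [← huv]
    calc (∑ p : X × X,
          (Real.sqrt (ρ p.1) * Real.sqrt (ρ p.2) * (∑ f ∈ F, μ f * (f p.1 * f p.2))) *
          (Real.sqrt (ρ p.1) * Real.sqrt (ρ p.2) * (s p.1 * s p.2))) ^ 2
        ≤ (∑ p : X × X,
          (Real.sqrt (ρ p.1) * Real.sqrt (ρ p.2) * (∑ f ∈ F, μ f * (f p.1 * f p.2))) ^ 2) *
          (∑ p : X × X, (Real.sqrt (ρ p.1) * Real.sqrt (ρ p.2) * (s p.1 * s p.2)) ^ 2) := CS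
      _ = A := by rw [hu2, hv2, mul_one]
  -- hence A is not too small
  have hAlb : (τ ^ 2 / dR) ^ 2 ≤ A := by
    refine le_trans ?_ hCS
    have h0 : 0 ≤ τ ^ 2 / dR := by positivity
    exact pow_le_pow_left₀ h0 hsavg 2
  -- the success probability identity
  have hident : ∑ f ∈ F, ∑ g ∈ F, ∑ x : X, ∑ z : X,
      (if g z * g x * f x = f z then μ f * μ g * ρ x * ρ z else 0) = 1 / 2 + A / 2 := by
    have hpt : ∀ f ∈ F, ∀ g ∈ F, ∀ x z : X,
        (if g z * g x * f x = f z then μ f * μ g * ρ x * ρ z else 0)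
        = μ f * μ g / 2 * (ρ x * ρ z)
          + μ f * μ g / 2 * ((ρ x * (f x * g x)) * (ρ z * (f z * g z))) := by
      intro f hf g hg x z
      rcases hF f hf x with h1 | h1 <;> rcases hF f hf z with h2 | h2 <;>
        rcases hF g hg x with h3 | h3 <;> rcases hF g hg z with h4 | h4 <;>
        rw [h1, h2, h3, h4] <;> norm_num <;> ring
    have hfg : ∀ f ∈ F, ∀ g ∈ F, (∑ x : X, ∑ z : X,
        if g z * g x * f x = f z then μ f * μ g * ρ x * ρ z else 0)
        = μ f * μ g / 2 + μ f * μ g / 2 * B f g ^ 2 := by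
      intro f hf g hg
      calc (∑ x : X, ∑ z : X, if g z * g x * f x = f z then μ f * μ g * ρ x * ρ z else 0)
          = ∑ x : X, ∑ z : X, (μ f * μ g / 2 * (ρ x * ρ z)
            + μ f * μ g / 2 * ((ρ x * (f x * g x)) * (ρ z * (f z * g z)))) :=
          Finset.sum_congr rfl fun x _ => Finset.sum_congr rfl fun z _ => hpt f hf g hg x z
        _ = (∑ x : X, ∑ z : X, μ f * μ g / 2 * (ρ x * ρ z))
            + ∑ x : X, ∑ z : X, μ f * μ g / 2 * ((ρ x * (f x * g x)) * (ρ z * (f z * g z))) := by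
          simp only [Finset.sum_add_distrib]
        _ = μ f * μ g / 2 * ((∑ x : X, ρ x) * (∑ z : X, ρ z))
            + μ f * μ g / 2 * ((∑ x : X, ρ x * (f x * g x)) * (∑ z : X, ρ z * (f z * g z))) := by
          rw [Finset.sum_mul_sum, Finset.sum_mul_sum]
          simp only [Finset.mul_sum]
        _ = μ f * μ g / 2 + μ f * μ g / 2 * B f g ^ 2 := by
          rw [hρ1, sq]
          simp only [hBdef]
          ring
    calc ∑ f ∈ F, ∑ g ∈ F, ∑ x : X, ∑ z : X,
        (if g z * g x * f x = f z then μ f * μ g * ρ x * ρ z else 0)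
        = ∑ f ∈ F, ∑ g ∈ F, (μ f * μ g / 2 + μ f * μ g / 2 * B f g ^ 2) :=
        Finset.sum_congr rfl fun f hf => Finset.sum_congr rfl fun g hg => hfg f hf g hg
      _ = (∑ f ∈ F, ∑ g ∈ F, μ f * μ g / 2)
          + ∑ f ∈ F, ∑ g ∈ F, μ f * μ g / 2 * B f g ^ 2 := by
        simp only [Finset.sum_add_distrib]
      _ = 1 / 2 + A / 2 := by
        have e1 : (∑ f ∈ F, ∑ g ∈ F, μ f * μ g / 2)
            = ((∑ f ∈ F, μ f) * (∑ g ∈ F, μ g)) / 2 := by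
          rw [Finset.sum_mul_sum]
          simp only [← Finset.sum_div]
        have e2 : (∑ f ∈ F, ∑ g ∈ F, μ f * μ g / 2 * B f g ^ 2) = A / 2 := by
          rw [hAdef, Finset.sum_div]
          refine Finset.sum_congr rfl fun f _ => ?_
          rw [Finset.sum_div]
          exact Finset.sum_congr rfl fun g _ => by ring
        rw [e1, e2, hμ1, one_mul]
  -- finish with arithmetic
  rw [hident]
  have harith : (1:ℝ)/32 / dR ^ 8 ≤ A / 2 := by
    have h2d : dR + 1 ≤ 2 * dR := by linarith
    have e1 : (dR + 1) ^ 4 ≤ 16 * dR ^ 4 := by nlinarith [sq_nonneg dR, sq_nonneg (dR+1), sq_nonneg (dR - 1)]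
    have e2 : dR ^ 6 ≤ dR ^ 8 := by nlinarith [pow_pos hdR0 6, pow_pos hdR0 8, pow_le_pow_right₀ hdR1 (by norm_num : 6 ≤ 8)]
    have hA2 : 1 / ((dR + 1) ^ 4 * dR ^ 2) ≤ A := by
      refine le_trans (le_of_eq ?_) hAlb
      rw [hτ]; field_simp
    have hden : (dR + 1) ^ 4 * dR ^ 2 ≤ 16 * dR ^ 8 := by
      nlinarith [mul_le_mul_of_nonneg_right e1 (sq_nonneg dR), pow_pos hdR0 6]
    have : 1 / (16 * dR ^ 8) ≤ 1 / ((dR + 1) ^ 4 * dR ^ 2) :=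
      one_div_le_one_div_of_le (by positivity) hden
    have h3 : 1 / (16 * dR ^ 8) ≤ A := le_trans this hA2
    calc (1:ℝ)/32 / dR ^ 8 = 1 / (16 * dR ^ 8) / 2 := by
          rw [div_div, div_div]; ring_nf
      _ ≤ A / 2 := by linarith
  linarith
end

section
/- Let X be a finite nonempty set, F a finite class of functions X → {−1,1}, μ a probability distribution on F, and ρ a probability distribution on X. Then E_{f,g∼μ independent}[ ( E_{x∼ρ}[ f(x)·g(x) ] )² ] ≥ (32 · sq(F)²)^{−4}. Equivalently, for f, g ∼ μ and x, z ∼ ρ all independent, E[ f(x)·g(x)·f(z)·g(z) ] ≥ (32 · sq(F)²)^{−4}. -/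
open MeasureTheory Finset

attribute [local instance] Classical.propDecidable

/-- Lower bound on the 2-party norm of the evaluation function:
`E_{f,g∼μ}[(E_{x∼ρ}[f(x)g(x)])²] ≥ (32·sq(F)²)⁻⁴`. -/
theorem two_party_norm_lower_bound {X : Type} [Fintype X] [Nonempty X]
    (F : Finset (X → ℝ)) (hF : F.Nonempty)
    (hsign : ∀ f ∈ F, ∀ x, f x = 1 ∨ f x = -1)
    (μ : (X → ℝ) → ℝ) (hμ : IsDistOn F μ) (ρ : X → ℝ) (hρ : IsDist ρ) :
    1 / (32 * (sqDim F : ℝ) ^ 2) ^ 4 ≤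
      ∑ f ∈ F, ∑ g ∈ F, μ f * μ g * (∑ x : X, ρ x * (f x * g x)) ^ 2 := by
  classical
  obtain ⟨hμ0, hμF, hμ1⟩ := hμ
  obtain ⟨hρ0, hρ1⟩ := hρ
  obtain ⟨f₀, hf₀⟩ := hF
  set C : (X → ℝ) → (X → ℝ) → ℝ := fun f g => ∑ x, ρ x * (f x * g x) with hCdef
  set d : ℕ := sqDim F with hddef
  -- boundedness of the SQ set
  have hbdd : BddAbove {k : ℕ | ∃ ρ : X → ℝ, IsDist ρ ∧ ∃ g : Fin k → (X → ℝ),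
      Function.Injective g ∧ (∀ i, g i ∈ F) ∧
      ∀ i j, i ≠ j → |∑ x, ρ x * (g i x * g j x)| ≤ 1 / (k : ℝ)} := by
    refine ⟨F.card, ?_⟩
    rintro k ⟨ρ', -, g, hginj, hgF, -⟩
    have hinj : Function.Injective (fun i : Fin k => (⟨g i, hgF i⟩ : {f // f ∈ F})) := by
      intro a b hab
      exact hginj (congrArg Subtype.val hab)
    simpa using Fintype.card_le_of_injective _ hinj
  have hmem_le : ∀ k : ℕ, (∃ ρ : X → ℝ, IsDist ρ ∧ ∃ g : Fin k → (X → ℝ),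
      Function.Injective g ∧ (∀ i, g i ∈ F) ∧
      ∀ i j, i ≠ j → |∑ x, ρ x * (g i x * g j x)| ≤ 1 / (k : ℝ)) → k ≤ d := by
    intro k hk
    exact le_csSup hbdd hk
  have hd1 : 1 ≤ d := by
    apply hmem_le
    exact ⟨ρ, ⟨hρ0, hρ1⟩, fun _ => f₀, fun a b _ => Subsingleton.elim a b,
      fun _ => hf₀, fun i j hij => absurd (Subsingleton.elim i j) hij⟩
  have hdr1 : (1 : ℝ) ≤ (d : ℝ) := by exact_mod_cast hd1
  set τ : ℝ := 1 / ((d : ℝ) + 1) with hτdef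
  have hτpos : 0 < τ := by rw [hτdef]; positivity
  have hτ1 : τ ≤ 1 := by
    rw [hτdef]
    rw [div_le_one (by linarith)]
    linarith
  -- symmetry of C
  have hsymm : ∀ u v : X → ℝ, C u v = C v u := by
    intro u v
    exact Finset.sum_congr rfl fun x _ => by ring
  -- C f f = 1 for signed f
  have hone : ∀ f ∈ F, C f f = 1 := by
    intro f hf
    have h2 : ∀ x, f x * f x = 1 := fun x => by
      rcases hsign f hf x with h | h <;> rw [h] <;> norm_num
    calc C f f = ∑ x, ρ x := Finset.sum_congr rfl fun x _ => by rw [h2 x, mul_one]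
    _ = 1 := hρ1
  -- the family of "independent" subsets of F
  set T : Finset (Finset (X → ℝ)) :=
    F.powerset.filter (fun S => ∀ f ∈ S, ∀ g ∈ S, f ≠ g → |C f g| ≤ τ) with hTdef
  have hTne : T.Nonempty := by
    refine ⟨∅, ?_⟩
    rw [hTdef, Finset.mem_filter]
    exact ⟨Finset.mem_powerset.2 (Finset.empty_subset F), fun f hf => absurd hf (by simp)⟩
  obtain ⟨S, hST, hSmax⟩ := T.exists_max_image Finset.card hTne
  have hSsub : S ⊆ F := Finset.mem_powerset.1 (Finset.mem_filter.1 hST).1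
  have hSind : ∀ f ∈ S, ∀ g ∈ S, f ≠ g → |C f g| ≤ τ := (Finset.mem_filter.1 hST).2
  -- any independent family has size at most d
  have hScard : S.card ≤ d := by
    by_contra hcon
    push_neg at hcon
    obtain ⟨S', hS'S, hS'card⟩ := Finset.exists_subset_card_eq (show d + 1 ≤ S.card from hcon)
    have : d + 1 ≤ d := by
      apply hmem_le
      refine ⟨ρ, ⟨hρ0, hρ1⟩, ?_⟩
      set e : Fin (d + 1) → {f // f ∈ S'} :=
        fun i => S'.equivFin.symm ⟨i.1, by rw [hS'card]; exact i.2⟩ with hedef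
      have heinj : Function.Injective e := by
        intro a b hab
        have h0 := S'.equivFin.symm.injective hab
        have h2 : a.1 = b.1 := by simpa using h0
        exact Fin.ext h2
      refine ⟨fun i => (e i).1, ?_, fun i => hSsub (hS'S (e i).2), ?_⟩
      · intro a b hab
        exact heinj (Subtype.ext hab)
      · intro i j hij
        have hne : ((e i : X → ℝ)) ≠ (e j : X → ℝ) := by
          intro hh
          exact hij (heinj (Subtype.ext hh))
        have h := hSind _ (hS'S (e i).2) _ (hS'S (e j).2) hne
        rw [hτdef] at h
        have hcast : 1 / (((d : ℕ) + 1 : ℕ) : ℝ) = 1 / ((d : ℝ) + 1) := by push_cast; ring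
        rw [hcast]
        exact h
    omega
  have hSne : S.Nonempty := by
    rw [Finset.nonempty_iff_ne_empty]
    intro hS0
    have h1 : ({f₀} : Finset (X → ℝ)) ∈ T := by
      rw [hTdef, Finset.mem_filter]
      refine ⟨Finset.mem_powerset.2 (by simpa using hf₀), ?_⟩
      intro f hf g hg hfg
      rw [Finset.mem_singleton] at hf hg
      exact absurd (hf.trans hg.symm) hfg
    have := hSmax _ h1
    rw [hS0] at this
    simp at this
  -- covering: every f in F nontrivially correlates with some member of S
  have hcover : ∀ f ∈ F, ∃ s ∈ S, τ ≤ |C f s| := by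
    intro f hf
    by_cases hfS : f ∈ S
    · refine ⟨f, hfS, ?_⟩
      rw [hone f hf]
      simpa using hτ1
    · have hns : insert f S ∉ T := by
        intro hmem
        have := hSmax _ hmem
        rw [Finset.card_insert_of_notMem hfS] at this
        omega
      have hnind : ∃ a ∈ insert f S, ∃ b ∈ insert f S, a ≠ b ∧ τ < |C a b| := by
        by_contra hcon
        push_neg at hcon
        exact hns (by
          rw [hTdef, Finset.mem_filter]
          exact ⟨Finset.mem_powerset.2 (Finset.insert_subset hf hSsub), hcon⟩)
      obtain ⟨a, ha, b, hb, hab, hτab⟩ := hnind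
      rcases Finset.mem_insert.1 ha with rfl | haS
      · rcases Finset.mem_insert.1 hb with rfl | hbS
        · exact absurd rfl hab
        · exact ⟨b, hbS, le_of_lt hτab⟩
      · rcases Finset.mem_insert.1 hb with rfl | hbS
        · exact ⟨a, haS, by rw [hsymm]; exact le_of_lt hτab⟩
        · exact absurd (hSind a haS b hbS hab) (not_le.2 hτab)
  -- mass of neighborhoods
  set m : (X → ℝ) → ℝ := fun s => ∑ f ∈ F.filter (fun f => τ ≤ |C f s|), μ f with hmdef
  have hsum1 : 1 ≤ ∑ s ∈ S, m s := by
    calc (1 : ℝ) = ∑ f ∈ F, μ f := hμ1.symm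
    _ ≤ ∑ f ∈ F, ∑ s ∈ S, (if τ ≤ |C f s| then μ f else 0) := by
        refine Finset.sum_le_sum fun f hf => ?_
        obtain ⟨s, hs, hτs⟩ := hcover f hf
        have h := Finset.single_le_sum (f := fun s => if τ ≤ |C f s| then μ f else 0)
          (fun i _ => by
            by_cases hcc : τ ≤ |C f i|
            · simp [hcc, hμ0 f]
            · simp [hcc]) hs
        rwa [if_pos hτs] at h
    _ = ∑ s ∈ S, ∑ f ∈ F, (if τ ≤ |C f s| then μ f else 0) := Finset.sum_comm
    _ = ∑ s ∈ S, m s := Finset.sum_congr rfl fun s _ => (Finset.sum_filter _ _).symm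
  have hex : ∃ s ∈ S, 1 / (S.card : ℝ) ≤ m s := by
    apply Finset.exists_le_of_sum_le hSne
    rw [Finset.sum_const, nsmul_eq_mul]
    have hSc : (0 : ℝ) < (S.card : ℝ) := by exact_mod_cast hSne.card_pos
    rw [mul_one_div, div_self (ne_of_gt hSc)]
    exact hsum1
  obtain ⟨s, hsS, hms⟩ := hex
  have hsF : s ∈ F := hSsub hsS
  have hm : 1 / (d : ℝ) ≤ m s := by
    refine le_trans ?_ hms
    apply one_div_le_one_div_of_le
    · exact_mod_cast hSne.card_pos
    · exact_mod_cast hScard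
  -- the correlation with s
  set c : ℝ := ∑ f ∈ F, μ f * (C f s) ^ 2 with hcdef
  have hcge : τ ^ 2 * m s ≤ c := by
    calc τ ^ 2 * m s = ∑ f ∈ F.filter (fun f => τ ≤ |C f s|), τ ^ 2 * μ f := by
          rw [hmdef]; rw [Finset.mul_sum]
    _ ≤ ∑ f ∈ F.filter (fun f => τ ≤ |C f s|), μ f * (C f s) ^ 2 := by
          refine Finset.sum_le_sum fun f hf => ?_
          have hfs : τ ≤ |C f s| := (Finset.mem_filter.1 hf).2
          have h2 : τ ^ 2 ≤ (C f s) ^ 2 := by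
            rw [← sq_abs (C f s)]
            exact pow_le_pow_left₀ hτpos.le hfs 2
          rw [mul_comm (τ ^ 2) (μ f)]
          exact mul_le_mul_of_nonneg_left h2 (hμ0 f)
    _ ≤ c := by
          refine Finset.sum_le_sum_of_subset_of_nonneg (Finset.filter_subset _ _) ?_
          intro f _ _
          exact mul_nonneg (hμ0 f) (sq_nonneg _)
  have hclow : τ ^ 2 * (1 / (d : ℝ)) ≤ c :=
    le_trans (mul_le_mul_of_nonneg_left hm (sq_nonneg τ)) hcge
  -- expansion lemma
  have hexp : ∀ u v : X → ℝ, (C u v) ^ 2 =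
      ∑ x, ∑ z, (ρ x * ρ z) * ((u x * v x) * (u z * v z)) := by
    intro u v
    rw [hCdef]
    simp only
    rw [sq, Finset.sum_mul_sum]
    exact Finset.sum_congr rfl fun x _ => Finset.sum_congr rfl fun z _ => by ring
  set H : X → X → ℝ := fun x z => ∑ f ∈ F, μ f * (f x * f z) with hHdef
  -- rewrite c
  have hc2 : c = ∑ x, ∑ z, (ρ x * ρ z) * ((s x * s z) * H x z) := by
    calc c = ∑ f ∈ F, ∑ x, ∑ z, μ f * ((ρ x * ρ z) * ((f x * s x) * (f z * s z))) := by
          refine Finset.sum_congr rfl fun f _ => ?_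
          rw [hexp f s]
          rw [Finset.mul_sum]
          exact Finset.sum_congr rfl fun x _ => Finset.mul_sum _ _ _
    _ = ∑ x, ∑ z, ∑ f ∈ F, μ f * ((ρ x * ρ z) * ((f x * s x) * (f z * s z))) := by
          rw [Finset.sum_comm]
          exact Finset.sum_congr rfl fun x _ => Finset.sum_comm
    _ = ∑ x, ∑ z, (ρ x * ρ z) * ((s x * s z) * H x z) := by
          refine Finset.sum_congr rfl fun x _ => Finset.sum_congr rfl fun z _ => ?_
          rw [hHdef]
          simp only
          rw [Finset.mul_sum, Finset.mul_sum]
          exact Finset.sum_congr rfl fun f _ => by ring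
  -- rewrite the goal sum
  have swap4 : ∀ A : (X → ℝ) → (X → ℝ) → X → X → ℝ,
      ∑ f ∈ F, ∑ g ∈ F, ∑ x, ∑ z, A f g x z = ∑ x, ∑ z, ∑ f ∈ F, ∑ g ∈ F, A f g x z := by
    intro A
    calc ∑ f ∈ F, ∑ g ∈ F, ∑ x, ∑ z, A f g x z
        = ∑ f ∈ F, ∑ g ∈ F, ∑ p : X × X, A f g p.1 p.2 :=
          Finset.sum_congr rfl fun f _ => Finset.sum_congr rfl fun g _ =>
            (Fintype.sum_prod_type (f := fun p : X × X => A f g p.1 p.2)).symm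
    _ = ∑ q ∈ F ×ˢ F, ∑ p : X × X, A q.1 q.2 p.1 p.2 :=
          (Finset.sum_product' F F (fun a b => ∑ p : X × X, A a b p.1 p.2)).symm
    _ = ∑ p : X × X, ∑ q ∈ F ×ˢ F, A q.1 q.2 p.1 p.2 := Finset.sum_comm
    _ = ∑ x, ∑ z, ∑ q ∈ F ×ˢ F, A q.1 q.2 x z :=
          Fintype.sum_prod_type (f := fun p : X × X => ∑ q ∈ F ×ˢ F, A q.1 q.2 p.1 p.2)
    _ = ∑ x, ∑ z, ∑ f ∈ F, ∑ g ∈ F, A f g x z :=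
          Finset.sum_congr rfl fun x _ => Finset.sum_congr rfl fun z _ =>
            Finset.sum_product' F F (fun a b => A a b x z)
  have hM : ∑ f ∈ F, ∑ g ∈ F, μ f * μ g * (C f g) ^ 2
      = ∑ x, ∑ z, (ρ x * ρ z) * (H x z) ^ 2 := by
    calc ∑ f ∈ F, ∑ g ∈ F, μ f * μ g * (C f g) ^ 2
        = ∑ f ∈ F, ∑ g ∈ F, ∑ x, ∑ z,
            (μ f * μ g) * ((ρ x * ρ z) * ((f x * f z) * (g x * g z))) := by
          refine Finset.sum_congr rfl fun f _ => Finset.sum_congr rfl fun g _ => ?_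
          rw [hexp f g, Finset.mul_sum]
          refine Finset.sum_congr rfl fun x _ => ?_
          rw [Finset.mul_sum]
          exact Finset.sum_congr rfl fun z _ => by ring
    _ = ∑ x, ∑ z, ∑ f ∈ F, ∑ g ∈ F,
            (μ f * μ g) * ((ρ x * ρ z) * ((f x * f z) * (g x * g z))) := swap4 _
    _ = ∑ x, ∑ z, (ρ x * ρ z) * (H x z) ^ 2 := by
          refine Finset.sum_congr rfl fun x _ => Finset.sum_congr rfl fun z _ => ?_
          rw [hHdef]
          simp only
          rw [sq, Finset.sum_mul_sum, Finset.mul_sum]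
          refine Finset.sum_congr rfl fun f _ => ?_
          rw [Finset.mul_sum]
          exact Finset.sum_congr rfl fun g _ => by ring
  -- Cauchy-Schwarz
  set a : X × X → ℝ := fun p => Real.sqrt (ρ p.1 * ρ p.2) * (s p.1 * s p.2) with hadef
  set b : X × X → ℝ := fun p => Real.sqrt (ρ p.1 * ρ p.2) * H p.1 p.2 with hbdef
  have hCS := Finset.sum_mul_sq_le_sq_mul_sq Finset.univ a b
  have hab : ∑ p : X × X, a p * b p = c := by
    rw [Fintype.sum_prod_type, hc2]
    refine Finset.sum_congr rfl fun x _ => Finset.sum_congr rfl fun z _ => ?_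
    calc a (x, z) * b (x, z)
        = (Real.sqrt (ρ x * ρ z)) ^ 2 * ((s x * s z) * H x z) := by
          rw [hadef, hbdef]; ring
    _ = (ρ x * ρ z) * ((s x * s z) * H x z) := by
          rw [Real.sq_sqrt (mul_nonneg (hρ0 x) (hρ0 z))]
  have hs2 : ∀ x, s x * s x = 1 := fun x => by
    rcases hsign s hsF x with h | h <;> rw [h] <;> norm_num
  have ha2 : ∑ p : X × X, a p ^ 2 = 1 := by
    rw [Fintype.sum_prod_type]
    have key : ∀ x z : X, a (x, z) ^ 2 = ρ x * ρ z := by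
      intro x z
      calc a (x, z) ^ 2 = (Real.sqrt (ρ x * ρ z)) ^ 2 * ((s x * s x) * (s z * s z)) := by
            rw [hadef]; ring
      _ = ρ x * ρ z := by
            rw [Real.sq_sqrt (mul_nonneg (hρ0 x) (hρ0 z)), hs2, hs2, mul_one, mul_one]
    calc ∑ x, ∑ z, a (x, z) ^ 2 = ∑ x, ∑ z, ρ x * ρ z :=
          Finset.sum_congr rfl fun x _ => Finset.sum_congr rfl fun z _ => key x z
    _ = (∑ x, ρ x) * (∑ z, ρ z) := (Finset.sum_mul_sum _ _ _ _).symm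
    _ = 1 := by rw [hρ1, mul_one]
  have hb2 : ∑ p : X × X, b p ^ 2 = ∑ x, ∑ z, (ρ x * ρ z) * (H x z) ^ 2 := by
    rw [Fintype.sum_prod_type]
    refine Finset.sum_congr rfl fun x _ => Finset.sum_congr rfl fun z _ => ?_
    calc b (x, z) ^ 2 = (Real.sqrt (ρ x * ρ z)) ^ 2 * (H x z) ^ 2 := by
          rw [hbdef]; ring
    _ = (ρ x * ρ z) * (H x z) ^ 2 := by
          rw [Real.sq_sqrt (mul_nonneg (hρ0 x) (hρ0 z))]
  rw [hab, ha2, hb2, one_mul] at hCS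
  -- final arithmetic
  rw [hM]
  refine le_trans ?_ hCS
  have hc0 : 0 ≤ τ ^ 2 * (1 / (d : ℝ)) := by positivity
  have hcc : (τ ^ 2 * (1 / (d : ℝ))) ^ 2 ≤ c ^ 2 := pow_le_pow_left₀ hc0 hclow 2
  refine le_trans ?_ hcc
  rw [hτdef]
  have hd0 : (0 : ℝ) < (d : ℝ) := by linarith
  have hkey : ((1 / ((d : ℝ) + 1)) ^ 2 * (1 / (d : ℝ))) ^ 2
      = 1 / (((d : ℝ) + 1) ^ 4 * (d : ℝ) ^ 2) := by
    field_simp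
  rw [hkey]
  apply one_div_le_one_div_of_le
  · positivity
  · have h2 : ((d : ℝ) + 1) ^ 4 ≤ 16 * (d : ℝ) ^ 4 := by
      have h4 := pow_le_pow_left₀ (by linarith : (0:ℝ) ≤ (d : ℝ) + 1)
        (by linarith : (d : ℝ) + 1 ≤ 2 * (d : ℝ)) 4
      nlinarith [h4]
    have h6 : (d : ℝ) ^ 6 ≤ (d : ℝ) ^ 8 := pow_le_pow_right₀ hdr1 (by norm_num)
    calc ((d : ℝ) + 1) ^ 4 * (d : ℝ) ^ 2 ≤ (16 * (d : ℝ) ^ 4) * (d : ℝ) ^ 2 :=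
          mul_le_mul_of_nonneg_right h2 (sq_nonneg _)
    _ = 16 * (d : ℝ) ^ 6 := by ring
    _ ≤ 16 * (d : ℝ) ^ 8 := by linarith
    _ ≤ (32 * (d : ℝ) ^ 2) ^ 4 := by nlinarith [pow_pos hd0 8]
end

section
/- Let R and W be finite nonempty sets and let F : R × W → {−1,1}. Define the 2-party norm R₂(F) = E[ F(r,w)·F(r,w′)·F(r′,w)·F(r′,w′) ], where r, r′ are independent uniform on R and w, w′ are independent uniform on W. Then for every a : R → {0,1}, b : W → {0,1}, and g : {0,1} × {0,1} → [−1,1], | E_{r uniform on R, w uniform on W}[ g(a(r), b(w)) · F(r,w) ] | ≤ 4 · R₂(F)^{1/4}. (In particular, R₂(F) ≥ 0, being equal to E_{w,w′}[(E_r[F(r,w)F(r,w′)])²].) -/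
open MeasureTheory Finset

attribute [local instance] Classical.propDecidable

/-- The 2-party norm
`R₂(F) = E_{r,r',w,w' uniform}[F(r,w)·F(r,w')·F(r',w)·F(r',w')]`. -/
noncomputable def twoPartyNorm {R W : Type} [Fintype R] [Fintype W]
    (F : R → W → ℝ) : ℝ :=
  (∑ r : R, ∑ r' : R, ∑ w : W, ∑ w' : W,
      F r w * F r w' * F r' w * F r' w') /
    ((Fintype.card R : ℝ) ^ 2 * (Fintype.card W : ℝ) ^ 2)

lemma key_pow {R W : Type} [Fintype R] [Nonempty R] [Fintype W] [Nonempty W]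
    (F : R → W → ℝ) (u : R → ℝ) (v : W → ℝ)
    (hu : ∀ r, |u r| ≤ 1) (hv : ∀ w, |v w| ≤ 1) :
    |(∑ r : R, ∑ w : W, u r * v w * F r w) /
        ((Fintype.card R : ℝ) * (Fintype.card W : ℝ))| ^ 4 ≤ twoPartyNorm F := by
  set m : ℝ := (Fintype.card R : ℝ) with hm
  set n : ℝ := (Fintype.card W : ℝ) with hn
  have hm0 : 0 < m := by positivity
  have hn0 : 0 < n := by positivity
  set y : R → ℝ := fun r => ∑ w : W, v w * F r w with hy
  set A : ℝ := ∑ r : R, ∑ w : W, u r * v w * F r w with hA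
  have hAy : A = ∑ r : R, u r * y r := by
    apply Finset.sum_congr rfl; intro r _
    rw [Finset.mul_sum]; apply Finset.sum_congr rfl; intro w _; ring
  set z : W → W → ℝ := fun w w' => ∑ r : R, F r w * F r w' with hz
  -- step 1
  have h1 : A ^ 2 ≤ m * ∑ r : R, (y r) ^ 2 := by
    rw [hAy]
    calc (∑ r : R, u r * y r) ^ 2
        ≤ (∑ r : R, (u r)^2) * ∑ r : R, (y r)^2 :=
          Finset.sum_mul_sq_le_sq_mul_sq _ _ _
      _ ≤ m * ∑ r : R, (y r)^2 := by
          apply mul_le_mul_of_nonneg_right _ (Finset.sum_nonneg fun r _ => sq_nonneg _)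
          calc (∑ r : R, (u r)^2) ≤ ∑ r : R, (1:ℝ) := by
                apply Finset.sum_le_sum; intro r _
                rw [← sq_abs]; exact pow_le_one₀ (abs_nonneg _) (hu r) |>.trans_eq rfl
            _ = m := by simp [hm]
  -- step 2: rewrite ∑ y² as double sum
  have h2 : ∑ r : R, (y r)^2 = ∑ w : W, ∑ w' : W, v w * v w' * z w w' := by
    have e1 : ∀ r : R, (y r)^2 = ∑ w : W, ∑ w' : W, v w * v w' * (F r w * F r w') := by
      intro r
      rw [sq, hy, Finset.sum_mul_sum]
      exact Finset.sum_congr rfl fun w _ => Finset.sum_congr rfl fun w' _ => by ring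
    simp only [e1]
    rw [Finset.sum_comm]
    apply Finset.sum_congr rfl; intro w _
    rw [Finset.sum_comm]
    apply Finset.sum_congr rfl; intro w' _
    rw [hz, Finset.mul_sum]
  -- step 3
  have h3 : (∑ w : W, ∑ w' : W, v w * v w' * z w w') ^ 2
      ≤ n^2 * ∑ w : W, ∑ w' : W, (z w w')^2 := by
    rw [show (∑ w : W, ∑ w' : W, v w * v w' * z w w')
          = ∑ p : W × W, v p.1 * v p.2 * z p.1 p.2 from
        (Fintype.sum_prod_type (f := fun p : W × W => v p.1 * v p.2 * z p.1 p.2)).symm,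
      show (∑ w : W, ∑ w' : W, (z w w')^2)
          = ∑ p : W × W, (z p.1 p.2)^2 from
        (Fintype.sum_prod_type (f := fun p : W × W => (z p.1 p.2)^2)).symm]
    calc (∑ p : W × W, v p.1 * v p.2 * z p.1 p.2) ^ 2
        ≤ (∑ p : W × W, (v p.1 * v p.2)^2) * ∑ p : W × W, (z p.1 p.2)^2 :=
          Finset.sum_mul_sq_le_sq_mul_sq _ _ _
      _ ≤ n^2 * ∑ p : W × W, (z p.1 p.2)^2 := by
          apply mul_le_mul_of_nonneg_right _ (Finset.sum_nonneg fun p _ => sq_nonneg _)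
          calc (∑ p : W × W, (v p.1 * v p.2)^2) ≤ ∑ _p : W × W, (1:ℝ) := by
                apply Finset.sum_le_sum; intro p _
                rw [mul_pow, ← sq_abs (v p.1), ← sq_abs (v p.2)]
                have := pow_le_one₀ (abs_nonneg (v p.1)) (hv p.1) (n := 2)
                have := pow_le_one₀ (abs_nonneg (v p.2)) (hv p.2) (n := 2)
                nlinarith [sq_nonneg (|v p.1|), sq_nonneg (|v p.2|)]
            _ = n^2 := by simp [hn, Fintype.card_prod]; ring
  -- step 4: numerator equals ∑ z²
  have h4 : (∑ r : R, ∑ r' : R, ∑ w : W, ∑ w' : W,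
      F r w * F r w' * F r' w * F r' w') = ∑ w : W, ∑ w' : W, (z w w')^2 := by
    have : ∀ w w' : W, (z w w')^2 = ∑ r : R, ∑ r' : R,
        F r w * F r w' * F r' w * F r' w' := by
      intro w w'
      rw [sq, hz, Finset.sum_mul_sum]
      exact Finset.sum_congr rfl fun r _ => Finset.sum_congr rfl fun r' _ => by ring
    calc (∑ r : R, ∑ r' : R, ∑ w : W, ∑ w' : W, F r w * F r w' * F r' w * F r' w')
        = ∑ r : R, ∑ w : W, ∑ r' : R, ∑ w' : W, F r w * F r w' * F r' w * F r' w' :=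
          Finset.sum_congr rfl fun r _ => Finset.sum_comm
      _ = ∑ w : W, ∑ r : R, ∑ r' : R, ∑ w' : W, F r w * F r w' * F r' w * F r' w' :=
          Finset.sum_comm
      _ = ∑ w : W, ∑ r : R, ∑ w' : W, ∑ r' : R, F r w * F r w' * F r' w * F r' w' :=
          Finset.sum_congr rfl fun w _ => Finset.sum_congr rfl fun r _ => Finset.sum_comm
      _ = ∑ w : W, ∑ w' : W, ∑ r : R, ∑ r' : R, F r w * F r w' * F r' w * F r' w' :=
          Finset.sum_congr rfl fun w _ => Finset.sum_comm
      _ = ∑ w : W, ∑ w' : W, (z w w')^2 :=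
          Finset.sum_congr rfl fun w _ => Finset.sum_congr rfl fun w' _ => (this w w').symm
  set Z : ℝ := ∑ w : W, ∑ w' : W, (z w w')^2 with hZ
  have hZ0 : 0 ≤ Z := Finset.sum_nonneg fun w _ => Finset.sum_nonneg fun w' _ => sq_nonneg _
  have hA4 : A^4 ≤ m^2 * n^2 * Z := by
    have hy2 : 0 ≤ ∑ r : R, (y r)^2 := Finset.sum_nonneg fun r _ => sq_nonneg _
    calc A^4 = (A^2)^2 := by ring
      _ ≤ (m * ∑ r : R, (y r)^2)^2 := by
          exact pow_le_pow_left₀ (sq_nonneg A) h1 2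
      _ = m^2 * (∑ r : R, (y r)^2)^2 := by ring
      _ ≤ m^2 * (n^2 * Z) := by
          apply mul_le_mul_of_nonneg_left _ (sq_nonneg m)
          rw [h2]; exact h3
      _ = m^2 * n^2 * Z := by ring
  have hR2 : twoPartyNorm F = Z / (m^2 * n^2) := by
    rw [twoPartyNorm, h4]
  rw [hR2, abs_div, div_pow, div_le_div_iff₀ (by positivity) (by positivity)]
  calc |A|^4 * (m^2*n^2) = A^4 * (m^2*n^2) := by rw [← abs_pow, abs_of_nonneg (by positivity : (0:ℝ) ≤ A^4)]
    _ ≤ (m^2*n^2*Z) * (m^2*n^2) := mul_le_mul_of_nonneg_right hA4 (by positivity)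
    _ = Z * |m*n|^4 := by rw [abs_of_pos (by positivity : (0:ℝ) < m*n)]; ring

lemma key_abs {R W : Type} [Fintype R] [Nonempty R] [Fintype W] [Nonempty W]
    (F : R → W → ℝ) (u : R → ℝ) (v : W → ℝ)
    (hu : ∀ r, |u r| ≤ 1) (hv : ∀ w, |v w| ≤ 1) :
    |(∑ r : R, ∑ w : W, u r * v w * F r w) /
        ((Fintype.card R : ℝ) * (Fintype.card W : ℝ))| ≤
      twoPartyNorm F ^ ((1 : ℝ) / 4) := by
  set T : ℝ := (∑ r : R, ∑ w : W, u r * v w * F r w) /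
      ((Fintype.card R : ℝ) * (Fintype.card W : ℝ)) with hT
  have h := key_pow F u v hu hv
  rw [← hT] at h
  have hTeq : |T| = (|T| ^ (4:ℕ)) ^ ((1:ℝ)/4) := by
    rw [← Real.rpow_natCast |T| 4, ← Real.rpow_mul (abs_nonneg _)]
    norm_num
  rw [hTeq]
  exact Real.rpow_le_rpow (by positivity) h (by norm_num)

/-- BNS-type bound, 2-bit instance: the correlation (under the uniform distribution)
of a sign matrix `F` with the expected output `g(a(r), b(w))` of any randomized 2-bit
simultaneous protocol is at most `4 · R₂(F)^{1/4}`. -/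
theorem two_bit_correlation_le_two_party_norm {R W : Type}
    [Fintype R] [Nonempty R] [Fintype W] [Nonempty W]
    (F : R → W → ℝ) (hF : ∀ r w, F r w = 1 ∨ F r w = -1)
    (a : R → Bool) (b : W → Bool) (g : Bool → Bool → ℝ)
    (hg : ∀ s t, |g s t| ≤ 1) :
    |(∑ r : R, ∑ w : W, g (a r) (b w) * F r w) /
        ((Fintype.card R : ℝ) * (Fintype.card W : ℝ))| ≤
      4 * twoPartyNorm F ^ ((1 : ℝ) / 4) := by
  classical
  set m : ℝ := (Fintype.card R : ℝ)
  set n : ℝ := (Fintype.card W : ℝ)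
  set u : Bool → R → ℝ := fun s r => if a r = s then 1 else 0 with hu
  set v : Bool → W → ℝ := fun t w => if b w = t then 1 else 0 with hv
  have hdecomp : (∑ r : R, ∑ w : W, g (a r) (b w) * F r w)
      = ∑ s : Bool, ∑ t : Bool,
          g s t * ∑ r : R, ∑ w : W, u s r * v t w * F r w := by
    have : ∀ (r : R) (w : W), g (a r) (b w) * F r w
        = ∑ s : Bool, ∑ t : Bool, g s t * (u s r * v t w * F r w) := by
      intro r w
      cases h1 : a r <;> cases h2 : b w <;>
        simp [hu, hv, Fintype.sum_bool, h1, h2]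
    calc (∑ r : R, ∑ w : W, g (a r) (b w) * F r w)
        = ∑ r : R, ∑ w : W, ∑ s : Bool, ∑ t : Bool,
            g s t * (u s r * v t w * F r w) := by
          exact Finset.sum_congr rfl fun r _ => Finset.sum_congr rfl fun w _ => this r w
      _ = ∑ s : Bool, ∑ t : Bool, ∑ r : R, ∑ w : W,
            g s t * (u s r * v t w * F r w) :=
          calc (∑ r : R, ∑ w : W, ∑ s : Bool, ∑ t : Bool, g s t * (u s r * v t w * F r w))
              = ∑ r : R, ∑ s : Bool, ∑ w : W, ∑ t : Bool, g s t * (u s r * v t w * F r w) :=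
                Finset.sum_congr rfl fun r _ => Finset.sum_comm
            _ = ∑ s : Bool, ∑ r : R, ∑ w : W, ∑ t : Bool, g s t * (u s r * v t w * F r w) :=
                Finset.sum_comm
            _ = ∑ s : Bool, ∑ r : R, ∑ t : Bool, ∑ w : W, g s t * (u s r * v t w * F r w) :=
                Finset.sum_congr rfl fun s _ => Finset.sum_congr rfl fun r _ => Finset.sum_comm
            _ = ∑ s : Bool, ∑ t : Bool, ∑ r : R, ∑ w : W, g s t * (u s r * v t w * F r w) :=
                Finset.sum_congr rfl fun s _ => Finset.sum_comm
      _ = ∑ s : Bool, ∑ t : Bool,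
            g s t * ∑ r : R, ∑ w : W, u s r * v t w * F r w := by
          refine Finset.sum_congr rfl fun s _ => Finset.sum_congr rfl fun t _ => ?_
          rw [Finset.mul_sum]
          exact Finset.sum_congr rfl fun r _ => (Finset.mul_sum _ _ _).symm
  rw [hdecomp, Finset.sum_div]
  have step : ∀ s : Bool,
      |(∑ t : Bool, g s t * ∑ r : R, ∑ w : W, u s r * v t w * F r w) / (m * n)|
        ≤ 2 * twoPartyNorm F ^ ((1:ℝ)/4) := by
    intro s
    rw [Finset.sum_div]
    refine (Finset.abs_sum_le_sum_abs _ _).trans ?_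
    rw [show (2:ℝ) * twoPartyNorm F ^ ((1:ℝ)/4)
        = ∑ _t : Bool, twoPartyNorm F ^ ((1:ℝ)/4) by rw [Fintype.sum_bool]; ring]
    refine Finset.sum_le_sum fun t _ => ?_
    rw [mul_div_assoc, abs_mul]
    calc |g s t| * |(∑ r : R, ∑ w : W, u s r * v t w * F r w) / (m * n)|
        ≤ 1 * twoPartyNorm F ^ ((1:ℝ)/4) := by
          refine mul_le_mul (hg s t) ?_ (abs_nonneg _) zero_le_one
          exact key_abs F (u s) (v t)
            (fun r => by by_cases h : a r = s <;> simp [hu, h])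
            (fun w => by by_cases h : b w = t <;> simp [hv, h])
      _ = twoPartyNorm F ^ ((1:ℝ)/4) := one_mul _
  calc |∑ s : Bool, (∑ t : Bool, g s t * ∑ r : R, ∑ w : W, u s r * v t w * F r w) / (m * n)|
      ≤ ∑ s : Bool, |(∑ t : Bool, g s t * ∑ r : R, ∑ w : W, u s r * v t w * F r w) / (m * n)| :=
        Finset.abs_sum_le_sum_abs _ _
    _ ≤ ∑ _s : Bool, 2 * twoPartyNorm F ^ ((1:ℝ)/4) := Finset.sum_le_sum fun s _ => step s
    _ = 4 * twoPartyNorm F ^ ((1:ℝ)/4) := by rw [Fintype.sum_bool]; ring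
end

section
/- Let X and Y be finite nonempty sets and let A : X × Y → {−1,1} be the sign matrix of a function class (rows indexed by hypotheses, columns by inputs), with statistical query dimension sq(A). Then √(sq(A)/2) ≤ 1/disc×(A) ≤ 8·sq(A)²; equivalently, 1/(8·sq(A)²) ≤ disc×(A) ≤ √(2/sq(A)). -/
open MeasureTheory Finset

attribute [local instance] Classical.propDecidable

/-- The discrepancy of the sign matrix `A` with respect to the distribution with
weights `ζ x y`: the maximum over rectangles `B × C` of the absolute bias. -/
noncomputable def discUnder {X Y : Type} [Fintype X] [Fintype Y]
    (ζ : X → Y → ℝ) (A : X → Y → ℝ) : ℝ :=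
  ⨆ B : Finset X, ⨆ C : Finset Y, |∑ x ∈ B, ∑ y ∈ C, ζ x y * A x y|

/-- The product discrepancy of `A`: the infimum of `disc_ζ(A)` over product
distributions `ζ = μ ⊗ ν`. -/
noncomputable def discProd {X Y : Type} [Fintype X] [Fintype Y] (A : X → Y → ℝ) : ℝ :=
  sInf {r : ℝ | ∃ μ : X → ℝ, ∃ ν : Y → ℝ, IsDist μ ∧ IsDist ν ∧
    r = discUnder (fun x y => μ x * ν y) A}

/-- The statistical query dimension of the class of row functions of the sign matrix
`A`: the largest `d` such that for some distribution `ρ` on the columns there are `d`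
distinct rows that are pairwise at most `1/d`-correlated under `ρ`. -/
noncomputable def sqDimM {X Y : Type} [Fintype X] [Fintype Y] (A : X → Y → ℝ) : ℕ :=
  sSup {d : ℕ | ∃ ρ : Y → ℝ, IsDist ρ ∧ ∃ g : Fin d → X,
    Function.Injective (fun i => A (g i)) ∧
    ∀ i j, i ≠ j → |∑ y, ρ y * (A (g i) y * A (g j) y)| ≤ 1 / (d : ℝ)}

set_option linter.unusedSectionVars false
set_option linter.unusedVariables false

section helpers
variable {X Y : Type} [Fintype X] [Fintype Y]

lemma rect_le_discUnder (ζ A : X → Y → ℝ) (B : Finset X) (C : Finset Y) :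
    |∑ x ∈ B, ∑ y ∈ C, ζ x y * A x y| ≤ discUnder ζ A := by
  have h1 : |∑ x ∈ B, ∑ y ∈ C, ζ x y * A x y| ≤
      ⨆ C : Finset Y, |∑ x ∈ B, ∑ y ∈ C, ζ x y * A x y| :=
    le_ciSup (f := fun C : Finset Y => |∑ x ∈ B, ∑ y ∈ C, ζ x y * A x y|)
      (Set.Finite.bddAbove (Set.finite_range _)) C
  exact h1.trans
    (le_ciSup (f := fun B : Finset X => ⨆ C : Finset Y, |∑ x ∈ B, ∑ y ∈ C, ζ x y * A x y|)
      (Set.Finite.bddAbove (Set.finite_range _)) B)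

lemma discUnder_nonneg (ζ A : X → Y → ℝ) : 0 ≤ discUnder ζ A := by
  have := rect_le_discUnder ζ A ∅ ∅
  simpa using this

lemma discUnder_le (ζ A : X → Y → ℝ) (r : ℝ)
    (h : ∀ B C, |∑ x ∈ B, ∑ y ∈ C, ζ x y * A x y| ≤ r) : discUnder ζ A ≤ r :=
  ciSup_le fun B => ciSup_le fun C => h B C

noncomputable def corrW (ν : Y → ℝ) (A : X → Y → ℝ) (x x' : X) : ℝ :=
  ∑ y, ν y * (A x y * A x' y)

lemma corrW_comm (ν : Y → ℝ) (A : X → Y → ℝ) (x x' : X) :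
    corrW ν A x x' = corrW ν A x' x := by
  unfold corrW; exact Finset.sum_congr rfl fun y _ => by ring

lemma corrW_self (ν : Y → ℝ) (A : X → Y → ℝ) (hν : IsDist ν)
    (hA : ∀ x y, A x y = 1 ∨ A x y = -1) {x x' : X} (h : A x = A x') :
    corrW ν A x x' = 1 := by
  unfold corrW
  have : ∀ y, ν y * (A x y * A x' y) = ν y := by
    intro y
    have hx : A x' y = A x y := by rw [h]
    rcases hA x y with h1 | h1 <;> rw [hx, h1] <;> ring
  rw [Finset.sum_congr rfl fun y _ => this y, hν.2]
end helpers

section keylemmas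
variable {X Y : Type} [Fintype X] [Fintype Y]

lemma sum_mu_corr_le (A : X → Y → ℝ) (hA : ∀ x y, A x y = 1 ∨ A x y = -1)
    (μ : X → ℝ) (ν : Y → ℝ) (B : Finset X) (x' : X) :
    |∑ x ∈ B, μ x * corrW ν A x x'| ≤ 2 * discUnder (fun x y => μ x * ν y) A := by
  classical
  set C : Finset Y := univ.filter (fun y => A x' y = 1) with hC
  have key : ∀ x, μ x * corrW ν A x x'
      = (∑ y ∈ C, (μ x * ν y) * A x y) - (∑ y ∈ univ.filter (fun y => ¬ A x' y = 1), (μ x * ν y) * A x y) := by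
    intro x
    have h1 : μ x * corrW ν A x x' = ∑ y, (μ x * ν y) * (A x y * A x' y) := by
      unfold corrW; rw [Finset.mul_sum]; exact Finset.sum_congr rfl fun y _ => by ring
    rw [h1, ← Finset.sum_filter_add_sum_filter_not univ (fun y => A x' y = 1)]
    congr 1
    · exact Finset.sum_congr rfl fun y hy => by
        have := (Finset.mem_filter.mp hy).2
        rw [this]; ring
    · rw [← Finset.sum_neg_distrib]
      exact Finset.sum_congr rfl fun y hy => by
        have h2 := (Finset.mem_filter.mp hy).2
        have h3 : A x' y = -1 := (hA x' y).resolve_left h2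
        rw [h3]; ring
  rw [Finset.sum_congr rfl fun x _ => key x, Finset.sum_sub_distrib]
  have b1 := rect_le_discUnder (fun x y => μ x * ν y) A B C
  have b2 := rect_le_discUnder (fun x y => μ x * ν y) A B (univ.filter (fun y => ¬ A x' y = 1))
  calc |_ - _| ≤ |∑ x ∈ B, ∑ y ∈ C, (μ x * ν y) * A x y| +
        |∑ x ∈ B, ∑ y ∈ univ.filter (fun y => ¬ A x' y = 1), (μ x * ν y) * A x y| := abs_sub _ _
    _ ≤ _ := by linarith

lemma sum_mu_abs_corr_le (A : X → Y → ℝ) (hA : ∀ x y, A x y = 1 ∨ A x y = -1)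
    (μ : X → ℝ) (ν : Y → ℝ) (hμ : IsDist μ) (x' : X) :
    ∑ x, μ x * |corrW ν A x x'| ≤ 4 * discUnder (fun x y => μ x * ν y) A := by
  classical
  set P : Finset X := univ.filter (fun x => 0 ≤ corrW ν A x x') with hP
  have split : ∑ x, μ x * |corrW ν A x x'|
      = (∑ x ∈ P, μ x * corrW ν A x x') - (∑ x ∈ univ.filter (fun x => ¬ 0 ≤ corrW ν A x x'), μ x * corrW ν A x x') := by
    rw [← Finset.sum_filter_add_sum_filter_not univ (fun x => 0 ≤ corrW ν A x x')
      (fun x => μ x * |corrW ν A x x'|)]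
    congr 1
    · exact Finset.sum_congr rfl fun x hx => by
        rw [abs_of_nonneg (Finset.mem_filter.mp hx).2]
    · rw [← Finset.sum_neg_distrib]
      exact Finset.sum_congr rfl fun x hx => by
        have := (Finset.mem_filter.mp hx).2
        rw [abs_of_neg (lt_of_not_ge this)]; ring
  rw [split]
  have b1 := (abs_le.mp (sum_mu_corr_le A hA μ ν P x')).2
  have b2 := (abs_le.mp (sum_mu_corr_le A hA μ ν (univ.filter (fun x => ¬ 0 ≤ corrW ν A x x')) x')).1
  linarith
end keylemmas

section greedy
variable {X Y : Type} [Fintype X] [Fintype Y]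

lemma exists_good_fam (A : X → Y → ℝ) (hA : ∀ x y, A x y = 1 ∨ A x y = -1)
    (μ : X → ℝ) (ν : Y → ℝ) (hμ : IsDist μ) (m : ℕ) (hm : 1 ≤ m)
    (hδ : 4 * discUnder (fun x y => μ x * ν y) A * ((m : ℝ) - 1) * m ≤ 1) :
    ∃ g : Fin m → X, ∀ i j, i ≠ j → |corrW ν A (g i) (g j)| ≤ 1 / (m : ℝ) := by
  classical
  set δ := discUnder (fun x y => μ x * ν y) A with hδdef
  have hδ0 : 0 ≤ δ := discUnder_nonneg _ _
  have hm0 : (0:ℝ) < m := by exact_mod_cast hm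
  have claim : ∀ k, k ≤ m → ∃ g : Fin k → X,
      ∀ i j, i ≠ j → |corrW ν A (g i) (g j)| ≤ 1 / (m : ℝ) := by
    intro k
    induction k with
    | zero => intro _; exact ⟨fun i => i.elim0, fun i => i.elim0⟩
    | succ k ih =>
      intro hk1
      obtain ⟨g, hg⟩ := ih (Nat.le_of_succ_le hk1)
      -- find a new point
      set S : X → ℝ := fun x => ∑ i : Fin k, |corrW ν A x (g i)| with hS
      have havg : ∑ x, μ x * S x ≤ 4 * δ * k := by
        have : ∑ x, μ x * S x = ∑ i : Fin k, ∑ x, μ x * |corrW ν A x (g i)| := by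
          rw [Finset.sum_comm]
          exact Finset.sum_congr rfl fun x _ => by rw [hS, Finset.mul_sum]
        rw [this]
        calc ∑ i : Fin k, ∑ x, μ x * |corrW ν A x (g i)|
            ≤ ∑ _i : Fin k, 4 * δ :=
              Finset.sum_le_sum fun i _ => sum_mu_abs_corr_le A hA μ ν hμ (g i)
          _ = 4 * δ * k := by simp [Finset.sum_const, mul_comm]
      have hex : ∃ x, S x ≤ 4 * δ * k := by
        by_contra hcon
        push_neg at hcon
        have hx0 : ∃ x, 0 < μ x := by
          by_contra hcon2
          push_neg at hcon2
          have hz : ∀ x, μ x = 0 := fun x => le_antisymm (hcon2 x) (hμ.1 x)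
          have hsum := hμ.2
          simp [hz] at hsum
        obtain ⟨x₀, hx₀⟩ := hx0
        have hlt : ∑ x, μ x * (4 * δ * k) < ∑ x, μ x * S x := by
          apply Finset.sum_lt_sum
          · intro x _
            exact mul_le_mul_of_nonneg_left (le_of_lt (hcon x)) (hμ.1 x)
          · exact ⟨x₀, Finset.mem_univ x₀, by
              exact mul_lt_mul_of_pos_left (hcon x₀) hx₀⟩
        rw [← Finset.sum_mul, hμ.2, one_mul] at hlt
        linarith
      obtain ⟨x, hx⟩ := hex
      -- bound on each new correlation
      have hbound : ∀ i : Fin k, |corrW ν A x (g i)| ≤ 1 / (m : ℝ) := by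
        intro i
        have h1 : |corrW ν A x (g i)| ≤ S x := by
          rw [hS]
          exact Finset.single_le_sum (f := fun i => |corrW ν A x (g i)|)
            (fun i _ => abs_nonneg _) (Finset.mem_univ i)
        have hkm : (k : ℝ) ≤ (m : ℝ) - 1 := by
          have : (k:ℝ) + 1 ≤ m := by exact_mod_cast hk1
          linarith
        have h2 : 4 * δ * k ≤ 4 * δ * ((m:ℝ) - 1) := by
          apply mul_le_mul_of_nonneg_left hkm (by positivity)
        have h3 : 4 * δ * ((m:ℝ) - 1) ≤ 1 / m := by
          rw [le_div_iff₀ hm0]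
          linarith [hδ]
        linarith
      refine ⟨fun i => if h : (i : ℕ) < k then g ⟨i, h⟩ else x, ?_⟩
      intro i j hij
      by_cases hi : (i : ℕ) < k <;> by_cases hj : (j : ℕ) < k
      · simp only [dif_pos hi, dif_pos hj]
        apply hg
        intro hcon; apply hij
        have : (⟨(i:ℕ), hi⟩ : Fin k).val = (⟨(j:ℕ), hj⟩ : Fin k).val := by rw [hcon]
        exact Fin.ext this
      · simp only [dif_pos hi, dif_neg hj]
        rw [corrW_comm]
        exact hbound _
      · simp only [dif_neg hi, dif_pos hj]
        exact hbound _
      · exfalso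
        apply hij
        have hik : (i : ℕ) = k := le_antisymm (Nat.lt_succ_iff.mp i.isLt) (le_of_not_gt hi)
        have hjk : (j : ℕ) = k := le_antisymm (Nat.lt_succ_iff.mp j.isLt) (le_of_not_gt hj)
        exact Fin.ext (hik.trans hjk.symm)
  exact claim m le_rfl
end greedy

section sqset
variable {X Y : Type} [Fintype X] [Fintype Y]

def sqSet (A : X → Y → ℝ) : Set ℕ :=
  {d : ℕ | ∃ ρ : Y → ℝ, IsDist ρ ∧ ∃ g : Fin d → X,
    Function.Injective (fun i => A (g i)) ∧
    ∀ i j, i ≠ j → |∑ y, ρ y * (A (g i) y * A (g j) y)| ≤ 1 / (d : ℝ)}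

lemma sqSet_bddAbove (A : X → Y → ℝ) : BddAbove (sqSet A) := by
  refine ⟨Fintype.card X, fun d hd => ?_⟩
  obtain ⟨ρ, _, g, hg, _⟩ := hd
  have hginj : Function.Injective g := fun i j h => hg (by simp [h])
  simpa using Fintype.card_le_of_injective g hginj

lemma isDist_uniform [Nonempty Y] : IsDist (fun _ : Y => 1 / (Fintype.card Y : ℝ)) := by
  have hc : (0:ℝ) < Fintype.card Y := by
    exact_mod_cast Fintype.card_pos
  constructor
  · intro _; positivity
  · rw [Finset.sum_const, Finset.card_univ, nsmul_eq_mul]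
    field_simp

lemma one_mem_sqSet [Nonempty X] [Nonempty Y] (A : X → Y → ℝ) : 1 ∈ sqSet A := by
  refine ⟨fun _ => 1 / (Fintype.card Y : ℝ), isDist_uniform, fun _ => Classical.arbitrary X,
    fun i j _ => Subsingleton.elim i j, fun i j hij => absurd (Subsingleton.elim i j) hij⟩

lemma sqSet_nonempty [Nonempty X] [Nonempty Y] (A : X → Y → ℝ) : (sqSet A).Nonempty :=
  ⟨1, one_mem_sqSet A⟩
end sqset

section upper
variable {X Y : Type} [Fintype X] [Fintype Y]

lemma main_upper (A : X → Y → ℝ) (hA : ∀ x y, A x y = 1 ∨ A x y = -1)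
    (ρ : Y → ℝ) (hρ : IsDist ρ) (d : ℕ) (hd : 1 ≤ d) (g : Fin d → X)
    (hcorr : ∀ i j, i ≠ j → |corrW ρ A (g i) (g j)| ≤ 1 / (d : ℝ)) :
    ∃ μ : X → ℝ, IsDist μ ∧
      discUnder (fun x y => μ x * ρ y) A ≤ Real.sqrt (2 / (d : ℝ)) := by
  classical
  have hd0 : (0:ℝ) < d := by exact_mod_cast hd
  set μ : X → ℝ := fun x => (∑ i : Fin d, if g i = x then (1:ℝ) else 0) / d with hμdef
  have hμdist : IsDist μ := by
    constructor
    · intro x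
      apply div_nonneg _ hd0.le
      exact Finset.sum_nonneg fun i _ => by split <;> norm_num
    · rw [hμdef]
      rw [← Finset.sum_div]
      rw [Finset.sum_comm]
      have : ∀ i : Fin d, ∑ x, (if g i = x then (1:ℝ) else 0) = 1 := by
        intro i; rw [Finset.sum_ite_eq]; simp
      rw [Finset.sum_congr rfl fun i _ => this i]
      simp
      omega
  refine ⟨μ, hμdist, discUnder_le _ _ _ fun B C => ?_⟩
  set c : Fin d → ℝ := fun i => ∑ y ∈ C, ρ y * A (g i) y with hcdef
  set T : ℝ := ∑ i, c i ^ 2 with hTdef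
  have hT0 : 0 ≤ T := Finset.sum_nonneg fun i _ => sq_nonneg _
  set F : Y → ℝ := fun y => ∑ i, c i * A (g i) y with hFdef
  -- step 1 : ⟨1_C, F⟩ = T
  have hTF : ∑ y ∈ C, ρ y * F y = T := by
    calc ∑ y ∈ C, ρ y * F y
        = ∑ y ∈ C, ∑ i, c i * (ρ y * A (g i) y) := by
          refine Finset.sum_congr rfl fun y _ => ?_
          rw [hFdef, Finset.mul_sum]
          exact Finset.sum_congr rfl fun i _ => by ring
      _ = ∑ i, ∑ y ∈ C, c i * (ρ y * A (g i) y) := Finset.sum_comm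
      _ = ∑ i, c i * c i := by
          refine Finset.sum_congr rfl fun i _ => ?_
          rw [← Finset.mul_sum]
      _ = T := Finset.sum_congr rfl fun i _ => (sq (c i)).symm
  -- step 2 : ‖F‖² ≤ 2T
  have hexp : ∑ y, ρ y * F y ^ 2 = ∑ i, ∑ j, c i * c j * corrW ρ A (g i) (g j) := by
    have h1 : ∀ y, ρ y * F y ^ 2
        = ∑ i, ∑ j, c i * c j * (ρ y * (A (g i) y * A (g j) y)) := by
      intro y
      rw [pow_two, hFdef]
      rw [Finset.sum_mul_sum]
      rw [Finset.mul_sum]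
      refine Finset.sum_congr rfl fun i _ => ?_
      rw [Finset.mul_sum]
      exact Finset.sum_congr rfl fun j _ => by ring
    rw [Finset.sum_congr rfl fun y _ => h1 y, Finset.sum_comm]
    refine Finset.sum_congr rfl fun i _ => ?_
    rw [Finset.sum_comm]
    refine Finset.sum_congr rfl fun j _ => ?_
    rw [← Finset.mul_sum]
    rfl
  have hcs1 : (∑ i, |c i|) * (∑ i, |c i|) ≤ (d : ℝ) * T := by
    have := Finset.sum_mul_sq_le_sq_mul_sq univ (fun _ : Fin d => (1:ℝ)) (fun i => |c i|)
    simp only [one_mul, one_pow, Finset.sum_const, Finset.card_univ, Fintype.card_fin,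
      nsmul_eq_mul, mul_one, sq_abs] at this
    calc (∑ i, |c i|) * (∑ i, |c i|) = (∑ i, |c i|) ^ 2 := (sq _).symm
      _ ≤ (d : ℝ) * ∑ i, c i ^ 2 := this
      _ = (d : ℝ) * T := rfl
  have hF2 : ∑ y, ρ y * F y ^ 2 ≤ 2 * T := by
    rw [hexp]
    have hterm : ∀ i j, c i * c j * corrW ρ A (g i) (g j)
        ≤ |c i| * |c j| * (1 / (d:ℝ)) + (if i = j then c i ^ 2 else 0) := by
      intro i j
      by_cases h : i = j
      · subst h
        rw [corrW_self ρ A hρ hA rfl, if_pos rfl, mul_one]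
        have h2 : 0 ≤ |c i| * |c i| * (1/(d:ℝ)) := by positivity
        nlinarith [h2]
      · rw [if_neg h, add_zero]
        calc c i * c j * corrW ρ A (g i) (g j)
            ≤ |c i * c j * corrW ρ A (g i) (g j)| := le_abs_self _
          _ = |c i| * |c j| * |corrW ρ A (g i) (g j)| := by rw [abs_mul, abs_mul]
          _ ≤ |c i| * |c j| * (1 / (d:ℝ)) := by
              apply mul_le_mul_of_nonneg_left (hcorr i j h) (by positivity)
    calc ∑ i, ∑ j, c i * c j * corrW ρ A (g i) (g j)
        ≤ ∑ i, ∑ j, (|c i| * |c j| * (1 / (d:ℝ)) + (if i = j then c i ^ 2 else 0)) :=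
          Finset.sum_le_sum fun i _ => Finset.sum_le_sum fun j _ => hterm i j
      _ = (∑ i, |c i|) * (∑ i, |c i|) * (1 / (d:ℝ)) + T := by
          rw [Finset.sum_congr rfl fun i (_ : i ∈ univ) => Finset.sum_add_distrib]
          rw [Finset.sum_add_distrib]
          congr 1
          · rw [Finset.sum_mul_sum, Finset.sum_mul]
            refine Finset.sum_congr rfl fun i _ => ?_
            rw [Finset.sum_mul]
          · refine Finset.sum_congr rfl fun i _ => ?_
            rw [Finset.sum_ite_eq]
            simp
      _ ≤ (d : ℝ) * T * (1 / (d:ℝ)) + T := by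
          have h1 : (0:ℝ) ≤ 1 / (d:ℝ) := by positivity
          nlinarith [hcs1]
      _ = 2 * T := by field_simp; ring
  -- step 3 : T ≤ 2
  have hcs2 : T ^ 2 ≤ (∑ y ∈ C, ρ y) * (∑ y ∈ C, ρ y * F y ^ 2) := by
    have := Finset.sum_mul_sq_le_sq_mul_sq C (fun y => Real.sqrt (ρ y))
      (fun y => Real.sqrt (ρ y) * F y)
    have e1 : ∀ y, Real.sqrt (ρ y) * (Real.sqrt (ρ y) * F y) = ρ y * F y := by
      intro y; rw [← mul_assoc, Real.mul_self_sqrt (hρ.1 y)]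
    have e2 : ∀ y, Real.sqrt (ρ y) ^ 2 = ρ y := fun y => Real.sq_sqrt (hρ.1 y)
    have e3 : ∀ y, (Real.sqrt (ρ y) * F y) ^ 2 = ρ y * F y ^ 2 := by
      intro y; rw [mul_pow, e2]
    rw [Finset.sum_congr rfl fun y _ => e1 y, Finset.sum_congr rfl fun y _ => e2 y,
      Finset.sum_congr rfl fun y _ => e3 y] at this
    rw [hTF] at this
    exact this
  have hρC : ∑ y ∈ C, ρ y ≤ 1 := by
    rw [← hρ.2]
    exact Finset.sum_le_sum_of_subset_of_nonneg (Finset.subset_univ C)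
      fun y _ _ => hρ.1 y
  have hFC : ∑ y ∈ C, ρ y * F y ^ 2 ≤ ∑ y, ρ y * F y ^ 2 :=
    Finset.sum_le_sum_of_subset_of_nonneg (Finset.subset_univ C)
      fun y _ _ => mul_nonneg (hρ.1 y) (sq_nonneg _)
  have hρC0 : 0 ≤ ∑ y ∈ C, ρ y := Finset.sum_nonneg fun y _ => hρ.1 y
  have hFy0 : 0 ≤ ∑ y ∈ C, ρ y * F y ^ 2 :=
    Finset.sum_nonneg fun y _ => mul_nonneg (hρ.1 y) (sq_nonneg _)
  have hT2 : T ≤ 2 := by nlinarith [hcs2, hρC, hFC, hF2, hρC0, hFy0, hT0]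
  -- step 4 : identify the rectangle sum
  set S : Finset (Fin d) := univ.filter (fun i => g i ∈ B) with hSdef
  have hmain : ∑ x ∈ B, ∑ y ∈ C, μ x * ρ y * A x y = ∑ i ∈ S, c i / d := by
    calc ∑ x ∈ B, ∑ y ∈ C, μ x * ρ y * A x y
        = ∑ x ∈ B, μ x * ∑ y ∈ C, ρ y * A x y := by
          refine Finset.sum_congr rfl fun x _ => ?_
          rw [Finset.mul_sum]
          exact Finset.sum_congr rfl fun y _ => by ring
      _ = ∑ x ∈ B, ∑ i : Fin d, (if g i = x then (∑ y ∈ C, ρ y * A x y) / d else 0) := by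
          refine Finset.sum_congr rfl fun x _ => ?_
          rw [hμdef]
          rw [div_mul_eq_mul_div, Finset.sum_mul, Finset.sum_div]
          exact Finset.sum_congr rfl fun i _ => by split <;> simp
      _ = ∑ i : Fin d, (if g i ∈ B then (∑ y ∈ C, ρ y * A (g i) y) / d else 0) := by
          rw [Finset.sum_comm]
          refine Finset.sum_congr rfl fun i _ => ?_
          rw [Finset.sum_ite_eq]
      _ = ∑ i ∈ S, c i / d := by rw [hSdef, Finset.sum_filter]
  -- step 5 : Cauchy–Schwarz over S
  have hcs3 : (∑ i ∈ S, c i) ^ 2 ≤ (d : ℝ) * T := by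
    have h1 := Finset.sum_mul_sq_le_sq_mul_sq S (fun _ => (1:ℝ)) c
    simp only [one_mul, one_pow, Finset.sum_const, nsmul_eq_mul, mul_one] at h1
    have hcard : (S.card : ℝ) ≤ (d : ℝ) := by
      have := Finset.card_filter_le univ (fun i => g i ∈ B)
      have h2 : S.card ≤ d := by simpa [hSdef] using this
      exact_mod_cast h2
    have hTS : ∑ i ∈ S, c i ^ 2 ≤ T := by
      rw [hTdef]
      exact Finset.sum_le_sum_of_subset_of_nonneg (Finset.subset_univ S)
        fun i _ _ => sq_nonneg _
    have hS2 : 0 ≤ ∑ i ∈ S, c i ^ 2 := Finset.sum_nonneg fun i _ => sq_nonneg _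
    nlinarith [h1, hcard, hTS, hS2, hT0]
  -- finish
  have hsq : (∑ i ∈ S, c i / d) ^ 2 ≤ 2 / (d : ℝ) := by
    rw [← Finset.sum_div, div_pow]
    have hnum : (∑ i ∈ S, c i) ^ 2 ≤ 2 * d := by nlinarith [hcs3, hT2, hd0]
    rw [div_le_div_iff₀ (by positivity) hd0]
    calc (∑ i ∈ S, c i) ^ 2 * (d:ℝ) ≤ (2 * d) * d := by nlinarith [hnum, hd0]
      _ = 2 * (d:ℝ)^2 := by ring
  calc |∑ x ∈ B, ∑ y ∈ C, μ x * ρ y * A x y| = |∑ i ∈ S, c i / d| := by rw [hmain]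
    _ = Real.sqrt ((∑ i ∈ S, c i / d) ^ 2) := (Real.sqrt_sq_eq_abs _).symm
    _ ≤ Real.sqrt (2 / (d : ℝ)) := Real.sqrt_le_sqrt hsq
end upper


/-- Sherstov's theorem: `√(sq(A)/2) ≤ 1/disc×(A) ≤ 8·sq(A)²`, equivalently
`1/(8·sq(A)²) ≤ disc×(A) ≤ √(2/sq(A))`. -/
theorem sq_dim_vs_product_discrepancy {X Y : Type}
    [Fintype X] [Nonempty X] [Fintype Y] [Nonempty Y]
    (A : X → Y → ℝ) (hA : ∀ x y, A x y = 1 ∨ A x y = -1) :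
    (Real.sqrt ((sqDimM A : ℝ) / 2) ≤ 1 / discProd A ∧
      1 / discProd A ≤ 8 * (sqDimM A : ℝ) ^ 2) ∧
    (1 / (8 * (sqDimM A : ℝ) ^ 2) ≤ discProd A ∧
      discProd A ≤ Real.sqrt (2 / (sqDimM A : ℝ))) := by
  classical
  have hsq : sqDimM A = sSup (sqSet A) := rfl
  set d : ℕ := sqDimM A with hddef
  have hd1 : 1 ≤ d := by
    rw [hsq]
    exact le_csSup (sqSet_bddAbove A) (one_mem_sqSet A)
  have hd0 : (0:ℝ) < d := by exact_mod_cast hd1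
  set discSet : Set ℝ := {r : ℝ | ∃ μ : X → ℝ, ∃ ν : Y → ℝ, IsDist μ ∧ IsDist ν ∧
    r = discUnder (fun x y => μ x * ν y) A} with hdsdef
  have hdisc : discProd A = sInf discSet := rfl
  have hbdd : BddBelow discSet := by
    refine ⟨0, fun r hr => ?_⟩
    obtain ⟨μ, ν, _, _, hr⟩ := hr
    rw [hr]; exact discUnder_nonneg _ _
  have hne : discSet.Nonempty := by
    refine ⟨_, fun _ => 1 / (Fintype.card X : ℝ), fun _ => 1 / (Fintype.card Y : ℝ),
      isDist_uniform, isDist_uniform, rfl⟩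
  -- upper bound : discProd A ≤ √(2/d)
  have hmem := Nat.sSup_mem (sqSet_nonempty A) (sqSet_bddAbove A)
  rw [← hsq] at hmem
  obtain ⟨ρ, hρ, g, hginj, hgcorr⟩ := hmem
  have hup : discProd A ≤ Real.sqrt (2 / (d : ℝ)) := by
    obtain ⟨μ, hμ, hle⟩ := main_upper A hA ρ hρ d hd1 g hgcorr
    rw [hdisc]
    exact (csInf_le hbdd ⟨μ, ρ, hμ, hρ, rfl⟩).trans hle
  -- lower bound : 1/(8 d²) ≤ discProd A
  have hlow : 1 / (8 * (d:ℝ)^2) ≤ discProd A := by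
    rw [hdisc]
    refine le_csInf hne fun r hr => ?_
    obtain ⟨μ, ν, hμ, hν, hr⟩ := hr
    set δ : ℝ := discUnder (fun x y => μ x * ν y) A with hδdef
    rw [hr]
    by_contra hcon
    push_neg at hcon
    have hδ0 : 0 ≤ δ := discUnder_nonneg _ _
    have h8 : (0:ℝ) < 8 * (d:ℝ)^2 := by positivity
    have hδsmall : δ * (8 * (d:ℝ)^2) < 1 := by
      rw [← lt_div_iff₀ h8] at *
      linarith [hcon]
    set m : ℕ := d + 1 with hmdef
    have hmcast : ((m:ℕ):ℝ) = (d:ℝ) + 1 := by rw [hmdef]; push_cast; ring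
    have hd1' : (1:ℝ) ≤ (d:ℝ) := by exact_mod_cast hd1
    have hδcond : 4 * δ * ((m : ℝ) - 1) * m ≤ 1 := by
      rw [hmcast]
      have haux : 0 ≤ 4 * δ * (d:ℝ) * ((d:ℝ) - 1) := by
        apply mul_nonneg _ (by linarith)
        positivity
      nlinarith [hδsmall, haux]
    obtain ⟨g', hg'⟩ := exists_good_fam A hA μ ν hμ m (by omega) hδcond
    have hm2 : (2:ℝ) ≤ (m:ℝ) := by rw [hmcast]; linarith
    have hminj : Function.Injective (fun i => A (g' i)) := by
      intro i j hij
      by_contra hne'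
      have h1 := hg' i j hne'
      rw [corrW_self ν A hν hA hij] at h1
      have : 1 / (m:ℝ) ≤ 1/2 := by
        apply div_le_div_of_nonneg_left (by norm_num) (by norm_num) hm2
      rw [abs_one] at h1
      linarith
    have hmmem : m ∈ sqSet A := ⟨ν, hν, g', hminj, fun i j hij => hg' i j hij⟩
    have : m ≤ d := by
      rw [hsq]
      exact le_csSup (sqSet_bddAbove A) hmmem
    omega
  have hdp : 0 < discProd A := lt_of_lt_of_le (by positivity) hlow
  refine ⟨⟨?_, ?_⟩, hlow, hup⟩
  · have h1 : 1 / Real.sqrt (2 / (d:ℝ)) ≤ 1 / discProd A :=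
      one_div_le_one_div_of_le hdp hup
    have h2 : Real.sqrt ((d:ℝ)/2) = 1 / Real.sqrt (2/(d:ℝ)) := by
      rw [one_div, ← Real.sqrt_inv]
      congr 1
      rw [inv_div]
    rw [h2]; exact h1
  · have h1 : 1 / discProd A ≤ 1 / (1 / (8 * (d:ℝ)^2)) :=
      one_div_le_one_div_of_le (by positivity) hlow
    rwa [one_div_one_div] at h1
end
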